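/- arXiv:2511.09810 — 9 statements merged into one kernel-verified Lean document; each statement's English description precedes it below -/
import Mathlib

section
/- Along any solution of the overparameterized gradient flow, all the invariants are conserved: for every i between 1 and N−1, the matrix C_i(t) := W_i(t) W_i(t)ᵀ − W_{i+1}(t)ᵀ W_{i+1}(t) is constant in t, i.e. C_i(t) = C_i(0) for all t ≥ 0 in the interval of existence of the solution. -/
open Matrix

noncomputable section

abbrev Mat (a b : ℕ) : Type := Matrix (Fin a) (Fin b) ℝ

/-- Frobenius inner product. -/
def frobInner {a b : ℕ} (A B : Mat a b) : ℝ := ∑ i, ∑ j, A i j * B i j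

/-- Frobenius norm. -/
def frobNorm {a b : ℕ} (A : Mat a b) : ℝ := Real.sqrt (frobInner A A)

/-- Cast the row dimension of a matrix along an equality of natural numbers. -/
def mcast {a b c : ℕ} (h : a = b) (A : Mat a c) : Mat b c :=
  A.submatrix (Fin.cast h.symm) id

/-- Product of the layers `a, a+1, …, a+m-1`, i.e. `W_{a+m-1} ⋯ W_{a+1} W_a`. -/
def layerProd {d : ℕ → ℕ} (W : (i : ℕ) → Mat (d (i + 1)) (d i)) (a : ℕ) :
    (m : ℕ) → Mat (d (a + m)) (d a)
  | 0 => (1 : Mat (d a) (d a))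
  | m + 1 => W (a + m) * layerProd W a m

/-- The end-to-end product `𝐖(W) = W_{N-1} ⋯ W_0` (layers `0,…,N-1`). -/
def fullProd {d : ℕ → ℕ} (N : ℕ) (W : (i : ℕ) → Mat (d (i + 1)) (d i)) :
    Mat (d N) (d 0) :=
  mcast (congrArg d (Nat.zero_add N)) (layerProd W 0 N)

/-- The partial gradient `∇_{W_i} g(W) = (W_{N-1} ⋯ W_{i+1})ᵀ ∇f(𝐖(W)) (W_{i-1} ⋯ W_0)ᵀ`
(`0`-indexed layer `i < N`). -/
def gradTerm {d : ℕ → ℕ} (N : ℕ) (gradf : Mat (d N) (d 0) → Mat (d N) (d 0))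
    (W : (i : ℕ) → Mat (d (i + 1)) (d i)) (i : ℕ) (hi : i < N) :
    Mat (d (i + 1)) (d i) :=
  (mcast (congrArg d (by omega : i + 1 + (N - (i + 1)) = N))
      (layerProd W (i + 1) (N - (i + 1))))ᵀ *
    gradf (fullProd N W) *
    (mcast (congrArg d (Nat.zero_add i)) (layerProd W 0 i))ᵀ

/-- The overparameterized gradient flow equations at time `t`:
`Ẇ_i = −(W_{N-1} ⋯ W_{i+1})ᵀ ∇f(𝐖(W)) (W_{i-1} ⋯ W_0)ᵀ` for every layer `i < N`,
stated entrywise. -/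
def IsOvpFlowAt {d : ℕ → ℕ} (N : ℕ) (gradf : Mat (d N) (d 0) → Mat (d N) (d 0))
    (W : ℝ → (i : ℕ) → Mat (d (i + 1)) (d i)) (t : ℝ) : Prop :=
  ∀ (i : Fin N) (a : Fin (d (i.val + 1))) (b : Fin (d i.val)),
    HasDerivAt (fun s => W s i.val a b)
      (-(gradTerm N gradf (W t) i.val i.isLt) a b) t

/-- `gradf` is the gradient of `f` with respect to the Frobenius inner product,
expressed through directional (Gateaux) derivatives. -/
def IsGradientOf {a b : ℕ} (f : Mat a b → ℝ) (gradf : Mat a b → Mat a b) : Prop :=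
  ∀ X H : Mat a b, HasDerivAt (fun s : ℝ => f (X + s • H)) (frobInner (gradf X) H) 0



section Aux

variable {d : ℕ → ℕ}

lemma W_cast (V : (i : ℕ) → Mat (d (i+1)) (d i)) {j j' : ℕ} (e : j = j')
    (p : Fin (d (j'+1))) (q : Fin (d j')) :
    V j' p q = V j (Fin.cast (by rw [e]) p) (Fin.cast (by rw [e]) q) := by
  subst e; rfl

lemma lp_cast (V : (i : ℕ) → Mat (d (i+1)) (d i)) (a : ℕ) {m m' : ℕ} (e : m = m')
    (p : Fin (d (a+m'))) (q : Fin (d a)) :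
    layerProd V a m' p q = layerProd V a m (Fin.cast (by rw [e]) p) q := by
  subst e; rfl

lemma layerProd_succ_left (V : (i : ℕ) → Mat (d (i+1)) (d i)) (a : ℕ) :
    ∀ (m : ℕ) (p : Fin (d (a+(m+1)))) (q : Fin (d a)),
    layerProd V a (m+1) p q =
      ∑ c : Fin (d (a+1)), layerProd V (a+1) m (Fin.cast (congrArg d (by omega)) p) c * V a c q := by
  intro m
  induction m with
  | zero =>
    intro p q
    simp [layerProd, Matrix.mul_apply, Matrix.one_apply, Fin.cast]
  | succ m ih =>
    intro p q
    show (V (a+(m+1)) * layerProd V a (m+1)) p q = _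
    rw [Matrix.mul_apply]
    simp only [ih]
    simp only [Finset.mul_sum]
    rw [Finset.sum_comm]
    refine Finset.sum_congr rfl fun c _ => ?_
    conv_rhs => rw [show layerProd V (a+1) (m+1) = V (a+1+m) * layerProd V (a+1) m from rfl,
      Matrix.mul_apply, Finset.sum_mul]
    refine Fintype.sum_equiv (finCongr (congrArg d (by omega : a+(m+1) = a+1+m))) _ _ fun c1 => ?_
    rw [W_cast V (by omega : a+(m+1) = a+1+m)]
    simp [mul_assoc, Fin.cast]

lemma Q_peel (V : (i : ℕ) → Mat (d (i+1)) (d i)) (i : ℕ) :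
    mcast (congrArg d (Nat.zero_add (i+1))) (layerProd V 0 (i+1)) =
      V i * mcast (congrArg d (Nat.zero_add i)) (layerProd V 0 i) := by
  ext p q
  show (V (0+i) * layerProd V 0 i) (Fin.cast _ p) q = _
  rw [Matrix.mul_apply, Matrix.mul_apply]
  refine Fintype.sum_equiv (finCongr (congrArg d (Nat.zero_add i))) _ _ fun c => ?_
  rw [W_cast V (Nat.zero_add i)]
  simp [mcast, Fin.cast]

lemma P_peel {N : ℕ} (V : (i : ℕ) → Mat (d (i+1)) (d i)) {i : ℕ} (h : i + 1 < N) :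
    mcast (congrArg d (by omega : i + 1 + (N - (i + 1)) = N)) (layerProd V (i+1) (N-(i+1))) =
      mcast (congrArg d (by omega : i + 1 + 1 + (N - (i + 1 + 1)) = N))
          (layerProd V (i+2) (N-(i+2))) * V (i+1) := by
  ext p q
  show layerProd V (i+1) (N-(i+1)) (Fin.cast _ p) q = _
  rw [lp_cast V (i+1) (by omega : (N-(i+2))+1 = N-(i+1)),
    layerProd_succ_left V (i+1) (N-(i+2)), Matrix.mul_apply]
  refine Finset.sum_congr rfl fun c _ => ?_
  simp [mcast, Fin.cast]

lemma star_eq {N : ℕ} (gradf : Mat (d N) (d 0) → Mat (d N) (d 0))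
    (V : (i : ℕ) → Mat (d (i+1)) (d i)) (i : ℕ) (h1 : i < N) (h2 : i + 1 < N) :
    gradTerm N gradf V i h1 * (V i)ᵀ = (V (i+1))ᵀ * gradTerm N gradf V (i+1) h2 := by
  unfold gradTerm
  rw [P_peel V h2, Q_peel V i, Matrix.transpose_mul, Matrix.transpose_mul]
  simp only [Matrix.mul_assoc]

end Aux

/-- Along any solution of the overparameterized gradient flow, all the
invariants are conserved: for every (1-indexed) layer index between `1` and `N-1`, here the
0-indexed `i` with `i + 1 ≤ N - 1 + 1 = N`, i.e. `i < N - 1`, the matrix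
`C_i(t) = W_i(t) W_i(t)ᵀ − W_{i+1}(t)ᵀ W_{i+1}(t)` is constant on the interval of existence
`[0, T)` of the solution. -/
theorem stmt0 {n k N : ℕ} (hn : 1 ≤ n) (hk : n < k) (hN : 2 ≤ N)
    (d : ℕ → ℕ) (hd0 : d 0 = n) (hdN : d N = n) (hdmid : ∀ i, 0 < i → i < N → d i = k)
    (f : Mat (d N) (d 0) → ℝ) (gradf : Mat (d N) (d 0) → Mat (d N) (d 0))
    (hgradf : IsGradientOf f gradf)
    (T : EReal) (hT : 0 < T)
    (W : ℝ → (i : ℕ) → Mat (d (i + 1)) (d i))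
    (hflow : ∀ t : ℝ, 0 ≤ t → (t : EReal) < T → IsOvpFlowAt N gradf W t) :
    ∀ i : ℕ, i < N - 1 → ∀ t : ℝ, 0 ≤ t → (t : EReal) < T →
      W t i * (W t i)ᵀ - (W t (i + 1))ᵀ * W t (i + 1) =
        W 0 i * (W 0 i)ᵀ - (W 0 (i + 1))ᵀ * W 0 (i + 1) := by
  intro i hi t ht0 htT
  have hiN : i < N := by omega
  have hi1N : i + 1 < N := by omega
  ext a b
  set F : ℝ → ℝ := fun s =>
    (∑ c, W s i a c * W s i b c) - ∑ c, W s (i+1) c a * W s (i+1) c b with hF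
  have hderiv : ∀ x ∈ Set.Icc (0:ℝ) t, HasDerivAt F 0 x := by
    intro x hx
    have hxT : (x : EReal) < T :=
      lt_of_le_of_lt (by exact_mod_cast EReal.coe_le_coe_iff.mpr hx.2) htT
    have hfl := hflow x hx.1 hxT
    set A := gradTerm N gradf (W x) i hiN with hA
    set B := gradTerm N gradf (W x) (i+1) hi1N with hB
    have hWi : ∀ (p : Fin (d (i+1))) (q : Fin (d i)),
        HasDerivAt (fun s => W s i p q) (-(A p q)) x := by
      intro p q
      simpa using hfl ⟨i, hiN⟩ p q
    have hWi1 : ∀ (p : Fin (d (i+2))) (q : Fin (d (i+1))),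
        HasDerivAt (fun s => W s (i+1) p q) (-(B p q)) x := by
      intro p q
      simpa using hfl ⟨i+1, hi1N⟩ p q
    have h1 : HasDerivAt (fun s => ∑ c, W s i a c * W s i b c)
        (∑ c, (-(A a c) * W x i b c + W x i a c * -(A b c))) x :=
      HasDerivAt.fun_sum fun c _ => (hWi a c).mul (hWi b c)
    have h2 : HasDerivAt (fun s => ∑ c, W s (i+1) c a * W s (i+1) c b)
        (∑ c, (-(B c a) * W x (i+1) c b + W x (i+1) c a * -(B c b))) x :=
      HasDerivAt.fun_sum fun c _ => (hWi1 c a).mul (hWi1 c b)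
    have h3 := h1.sub h2
    have hs := star_eq gradf (W x) i hiN hi1N
    have hs2 := congrArg Matrix.transpose hs
    have e1 := congrFun (congrFun hs a) b
    have e2 := congrFun (congrFun hs2 a) b
    rw [← hA, ← hB] at e1 e2
    simp only [Matrix.mul_apply, Matrix.transpose_apply] at e1 e2
    have hzero : (∑ c, (-(A a c) * W x i b c + W x i a c * -(A b c))) -
        (∑ c, (-(B c a) * W x (i+1) c b + W x (i+1) c a * -(B c b))) = 0 := by
      simp only [neg_mul, mul_neg, Finset.sum_add_distrib, Finset.sum_neg_distrib]
      simp only [mul_comm] at e1 e2 ⊢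
      linarith [e1, e2]
    rw [hzero] at h3
    exact h3
  have hcont : ContinuousOn F (Set.Icc 0 t) := fun x hx =>
    ((hderiv x hx).differentiableAt.continuousAt).continuousWithinAt
  have hconst := constant_of_has_deriv_right_zero hcont
    (fun x hx => ((hderiv x (Set.mem_Icc_of_Ico hx)).hasDerivWithinAt)) t
    (Set.right_mem_Icc.mpr ht0)
  have hFt : F t = F 0 := hconst
  simpa [Matrix.sub_apply, Matrix.mul_apply, Matrix.transpose_apply, hF] using hFt
end
end

section
/- Suppose f : ℝ → ℝ is real analytic, bounded below with attained minimum value f_min, proper (every sublevel set is compact), f(0) > f_min, and there exists a positive-definite function α : [0,∞) → [0,∞) (α(0) = 0 and α(x) > 0 for x > 0) such that |f'(z)| ≥ α(f(z) − f_min) for all z ∈ ℝ; set s := sign(f'(0)). Then for any initialization (w_1⁰, w_2⁰), the solution of the vector overparameterized gradient flow satisfies lim_{t→∞} f(⟨w_2(t), w_1(t)⟩) = f_min if and only if ‖w_1⁰ − s w_2⁰‖ > 0. -/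
open scoped RealInnerProductSpace

noncomputable section

abbrev EVec (k : ℕ) : Type := EuclideanSpace ℝ (Fin k)

/-- The vector overparameterized gradient flow equations
`ẇ₁ = −f'(⟪w₂, w₁⟫) w₂`, `ẇ₂ = −f'(⟪w₂, w₁⟫) w₁` at time `t`. -/
def IsVecFlowAt {k : ℕ} (f : ℝ → ℝ) (w1 w2 : ℝ → EVec k) (t : ℝ) : Prop :=
  HasDerivAt w1 (-(deriv f ⟪w2 t, w1 t⟫) • w2 t) t ∧
  HasDerivAt w2 (-(deriv f ⟪w2 t, w1 t⟫) • w1 t) t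

open Set Filter

/-- Grönwall: a solution of a linear scalar-coefficient ODE vanishing at `0` vanishes forever. -/
lemma aux_gronwall_zero {E : Type*} [NormedAddCommGroup E] [NormedSpace ℝ E]
    (z : ℝ → E) (g : ℝ → ℝ) (hgc : ContinuousOn g (Ici 0))
    (hz : ∀ t, 0 ≤ t → HasDerivAt z (g t • z t) t) (h0 : z 0 = 0) :
    ∀ t, 0 ≤ t → z t = 0 := by
  intro T hT
  rcases hT.eq_or_lt with h | hT'
  · rw [← h]; exact h0
  obtain ⟨K, hK⟩ : ∃ K : ℝ, ∀ t ∈ Icc (0:ℝ) T, ‖g t‖ ≤ K :=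
    isCompact_Icc.exists_bound_of_continuousOn (hgc.mono Icc_subset_Ici_self)
  have hcont : ContinuousOn z (Icc 0 T) := fun t ht =>
    ((hz t ht.1).continuousAt).continuousWithinAt
  have hbound := norm_le_gronwallBound_of_norm_deriv_right_le (δ := 0) (K := K) (ε := 0)
    (a := 0) (b := T) hcont
    (fun t ht => ((hz t ht.1).hasDerivWithinAt))
    (by simp [h0])
    (fun t ht => by
      rw [norm_smul]
      have h1 : ‖g t‖ ≤ K := hK t ⟨ht.1, ht.2.le⟩
      have h2 : (0:ℝ) ≤ ‖z t‖ := norm_nonneg _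
      nlinarith)
  have := hbound T ⟨hT, le_rfl⟩
  rw [gronwallBound_ε0_δ0] at this
  exact norm_le_zero_iff.1 this

/-- If every critical point of `f` is a global min with value `fmin`, `f 0 > fmin` and
`f' 0 > 0`, then `f 0 ≤ f z` for all `z ≥ 0`. -/
lemma aux_mono (f : ℝ → ℝ) (fmin : ℝ) (hdiff : Differentiable ℝ f)
    (hcd : Continuous (deriv f))
    (hcrit : ∀ z, deriv f z = 0 → f z = fmin)
    (hf0 : fmin < f 0) (hpos : 0 < deriv f 0) :
    ∀ z, 0 ≤ z → f 0 ≤ f z := by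
  have key : ∀ a : ℝ, 0 < a → 0 ≤ deriv f a := by
    intro a ha
    by_contra hneg
    push_neg at hneg
    obtain ⟨w, hw, hw0⟩ : ∃ w ∈ Icc (0:ℝ) a, deriv f w = 0 := by
      have h0mem : (0:ℝ) ∈ Icc (deriv f a) (deriv f 0) := ⟨hneg.le, hpos.le⟩
      obtain ⟨w, hw, hww⟩ := intermediate_value_Icc' ha.le hcd.continuousOn h0mem
      exact ⟨w, hw, hww⟩
    set S : Set ℝ := Icc (0:ℝ) a ∩ deriv f ⁻¹' {0} with hS
    have hScpt : IsCompact S :=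
      isCompact_Icc.inter_right (isClosed_singleton.preimage hcd)
    have hSne : S.Nonempty := ⟨w, hw, hw0⟩
    obtain ⟨m, hmS, hmmin'⟩ := hScpt.exists_isMinOn hSne continuous_id.continuousOn
    have hmmin : ∀ w ∈ S, m ≤ w := fun w hw => hmmin' hw
    have hm0 : deriv f m = 0 := hmS.2
    have hmpos : 0 < m := by
      rcases hmS.1.1.eq_or_lt with h | h
      · exfalso; rw [← h] at hm0; exact hpos.ne' hm0
      · exact h
    have hmono : MonotoneOn f (Icc 0 m) := by
      apply monotoneOn_of_deriv_nonneg (convex_Icc 0 m)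
        hdiff.continuous.continuousOn hdiff.differentiableOn
      intro b hb
      rw [interior_Icc] at hb
      by_contra hbneg
      push_neg at hbneg
      obtain ⟨w', hw', hw'0⟩ : ∃ w' ∈ Icc (0:ℝ) b, deriv f w' = 0 := by
        have h0mem : (0:ℝ) ∈ Icc (deriv f b) (deriv f 0) := ⟨hbneg.le, hpos.le⟩
        obtain ⟨w', hw', hww⟩ := intermediate_value_Icc' hb.1.le hcd.continuousOn h0mem
        exact ⟨w', hw', hww⟩
      have hw'S : w' ∈ S :=
        ⟨⟨hw'.1, le_trans hw'.2 (le_trans hb.2.le hmS.1.2)⟩, hw'0⟩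
      have := hmmin w' hw'S
      have : m ≤ b := le_trans this hw'.2
      linarith [hb.2]
    have hfm : f m = fmin := hcrit m hm0
    have := hmono (left_mem_Icc.2 hmpos.le) (right_mem_Icc.2 hmpos.le) hmpos.le
    rw [hfm] at this
    linarith
  have hmono : MonotoneOn f (Ici 0) := by
    apply monotoneOn_of_deriv_nonneg (convex_Ici 0)
      hdiff.continuous.continuousOn hdiff.differentiableOn
    intro b hb
    rw [interior_Ici] at hb
    exact key b hb
  intro z hz
  exact hmono self_mem_Ici hz hz

set_option maxHeartbeats 1600000 in
/-- Suppose `f : ℝ → ℝ` is real analytic, bounded below with attained minimum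
`fmin`, proper, `f 0 > fmin`, and satisfies a positive-definite Polyak–Łojasiewicz inequality
`|f'(z)| ≥ α(f z − fmin)`; set `s = sign f'(0)`.  Then for any initialization, a global
solution of the vector overparameterized gradient flow satisfies
`lim_{t→∞} f(⟪w₂(t), w₁(t)⟫) = fmin` iff `‖w₁(0) − s w₂(0)‖ > 0`. -/
theorem stmt4 {k : ℕ} (hk : 1 ≤ k) (f : ℝ → ℝ) (fmin : ℝ)
    (hanalytic : ∀ x : ℝ, AnalyticAt ℝ f x)
    (hfmin_le : ∀ z : ℝ, fmin ≤ f z)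
    (hfmin_attained : ∃ z : ℝ, f z = fmin)
    (hproper : ∀ c : ℝ, IsCompact {z : ℝ | f z ≤ c})
    (hf0 : fmin < f 0)
    (α : ℝ → ℝ) (hα0 : α 0 = 0) (hαpos : ∀ x : ℝ, 0 < x → 0 < α x)
    (hαnonneg : ∀ x : ℝ, 0 ≤ x → 0 ≤ α x)
    (hPL : ∀ z : ℝ, α (f z - fmin) ≤ |deriv f z|)
    (w1 w2 : ℝ → EVec k)
    (hflow : ∀ t : ℝ, 0 ≤ t → IsVecFlowAt f w1 w2 t) :
    Filter.Tendsto (fun t : ℝ => f ⟪w2 t, w1 t⟫) Filter.atTop (nhds fmin) ↔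
      0 < ‖w1 0 - Real.sign (deriv f 0) • w2 0‖ := by
  have hdiff : Differentiable ℝ f := fun x => (hanalytic x).differentiableAt
  have hcd : Continuous (deriv f) := by
    have h1 : ContDiff ℝ 1 f := contDiff_iff_contDiffAt.2 fun x => (hanalytic x).contDiffAt
    exact h1.continuous_deriv le_rfl
  have hcrit : ∀ z, deriv f z = 0 → f z = fmin := by
    intro z hz
    by_contra hne
    have h1 : 0 < f z - fmin := sub_pos.2 ((hfmin_le z).lt_of_ne fun h => hne h.symm)
    have h2 := hPL z
    rw [hz, abs_zero] at h2
    linarith [hαpos _ h1]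
  have hd0 : deriv f 0 ≠ 0 := fun h => absurd (hcrit 0 h) (by linarith)
  set s : ℝ := Real.sign (deriv f 0) with hsdef
  have hs1 : s = 1 ∨ s = -1 := by
    rcases lt_trichotomy (deriv f 0) 0 with h | h | h
    · right; rw [hsdef, Real.sign_of_neg h]
    · exact absurd h hd0
    · left; rw [hsdef, Real.sign_of_pos h]
  have hsd : 0 < s * deriv f 0 := by
    rcases lt_trichotomy (deriv f 0) 0 with h | h | h
    · rw [hsdef, Real.sign_of_neg h]; nlinarith
    · exact absurd h hd0
    · rw [hsdef, Real.sign_of_pos h]; nlinarith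
  have hss : s * s = 1 := by rcases hs1 with h | h <;> rw [h] <;> norm_num
  have habs : |s| = 1 := by rcases hs1 with h | h <;> rw [h] <;> norm_num
  -- derivative of the inner product
  have hx : ∀ t, 0 ≤ t → HasDerivAt (fun t => (⟪w2 t, w1 t⟫ : ℝ))
      (-(deriv f ⟪w2 t, w1 t⟫) * (‖w1 t‖ ^ 2 + ‖w2 t‖ ^ 2)) t := by
    intro t ht
    obtain ⟨h1, h2⟩ := hflow t ht
    have h3 := h2.inner ℝ h1
    refine h3.congr_deriv ?_
    rw [real_inner_smul_right, real_inner_smul_left, real_inner_self_eq_norm_sq,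
      real_inner_self_eq_norm_sq]
    ring
  have hxc : ContinuousOn (fun t => (⟪w2 t, w1 t⟫ : ℝ)) (Ici 0) := fun t ht =>
    ((hx t ht).continuousAt).continuousWithinAt
  -- derivative of `F = f ∘ x`
  have hF : ∀ t, 0 ≤ t → HasDerivAt (fun t => f ⟪w2 t, w1 t⟫)
      (-(deriv f ⟪w2 t, w1 t⟫) ^ 2 * (‖w1 t‖ ^ 2 + ‖w2 t‖ ^ 2)) t := by
    intro t ht
    have h2 : HasDerivAt f (deriv f ⟪w2 t, w1 t⟫) ⟪w2 t, w1 t⟫ := (hdiff _).hasDerivAt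
    have h3 := h2.comp t (hx t ht)
    simp only [Function.comp_def] at h3
    refine h3.congr_deriv ?_
    ring
  have hFanti : AntitoneOn (fun t => f ⟪w2 t, w1 t⟫) (Ici 0) := by
    apply antitoneOn_of_deriv_nonpos (convex_Ici 0)
    · exact fun t ht => ((hF t ht).continuousAt).continuousWithinAt
    · rw [interior_Ici]
      exact fun t ht => (hF t (le_of_lt ht)).differentiableAt.differentiableWithinAt
    · intro t ht
      rw [interior_Ici] at ht
      rw [(hF t ht.le).deriv]
      nlinarith [sq_nonneg (deriv f ⟪w2 t, w1 t⟫), sq_nonneg ‖w1 t‖, sq_nonneg ‖w2 t‖]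
  -- derivative of `u = w1 - s • w2` and `v = w1 + s • w2`
  have hu : ∀ t, 0 ≤ t → HasDerivAt (fun t => w1 t - s • w2 t)
      ((s * deriv f ⟪w2 t, w1 t⟫) • (w1 t - s • w2 t)) t := by
    intro t ht
    obtain ⟨h1, h2⟩ := hflow t ht
    refine (h1.sub (h2.const_smul s)).congr_deriv ?_
    set d := deriv f ⟪w2 t, w1 t⟫ with hd
    have e1 : s * d * s = d := by linear_combination d * hss
    rw [smul_sub, smul_smul, smul_smul, e1]
    match_scalars <;> ring
  have hv : ∀ t, 0 ≤ t → HasDerivAt (fun t => w1 t + s • w2 t)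
      ((-(s * deriv f ⟪w2 t, w1 t⟫)) • (w1 t + s • w2 t)) t := by
    intro t ht
    obtain ⟨h1, h2⟩ := hflow t ht
    refine (h1.add (h2.const_smul s)).congr_deriv ?_
    set d := deriv f ⟪w2 t, w1 t⟫ with hd
    have e1 : -(s * d) * s = -d := by linear_combination (-d) * hss
    rw [smul_add, smul_smul, smul_smul, e1]
    match_scalars <;> ring
  have hgc : ContinuousOn (fun t => s * deriv f ⟪w2 t, w1 t⟫) (Ici 0) :=
    continuousOn_const.mul (hcd.comp_continuousOn hxc)
  -- the master convergence lemma: a uniform positive lower bound on ‖w1‖² + ‖w2‖²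
  -- implies convergence to fmin
  have main : ∀ b : ℝ, 0 < b → (∀ t, 0 ≤ t → b ≤ ‖w1 t‖ ^ 2 + ‖w2 t‖ ^ 2) →
      Filter.Tendsto (fun t : ℝ => f ⟪w2 t, w1 t⟫) Filter.atTop (nhds fmin) := by
    intro b hb hbS
    have key : ∀ ε : ℝ, 0 < ε → ∃ t₀, 0 ≤ t₀ ∧ f ⟪w2 t₀, w1 t₀⟫ < fmin + ε := by
      intro ε hε
      by_contra hcon
      push_neg at hcon
      set K : Set ℝ := {z | f z ≤ f ⟪w2 0, w1 0⟫} ∩ f ⁻¹' (Ici (fmin + ε)) with hK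
      have hKc : IsCompact K :=
        (hproper _).inter_right (isClosed_Ici.preimage hdiff.continuous)
      have hKne : (⟪w2 0, w1 0⟫ : ℝ) ∈ K := by
        refine ⟨?_, hcon 0 le_rfl⟩
        simp only [Set.mem_setOf_eq]
        exact le_rfl
      obtain ⟨z₀, hz₀K, hz₀min'⟩ := hKc.exists_isMinOn ⟨_, hKne⟩
        ((continuous_abs.comp hcd).continuousOn)
      have hz₀min : ∀ z ∈ K, |deriv f z₀| ≤ |deriv f z| := fun z hz => hz₀min' hz
      set δ := |deriv f z₀| with hδdef
      have hδ : 0 < δ := by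
        rw [hδdef, abs_pos]
        intro h
        have h1 := hcrit z₀ h
        have h2 : fmin + ε ≤ f z₀ := hz₀K.2
        rw [h1] at h2
        linarith
      have hxK : ∀ t, 0 ≤ t → (⟪w2 t, w1 t⟫ : ℝ) ∈ K := by
        intro t ht
        refine ⟨?_, hcon t ht⟩
        simp only [Set.mem_setOf_eq]
        exact hFanti self_mem_Ici ht ht
      have hG' : ∀ t : ℝ, 0 ≤ t → HasDerivAt (fun t => f ⟪w2 t, w1 t⟫ + δ ^ 2 * b * t)
          (-(deriv f ⟪w2 t, w1 t⟫) ^ 2 * (‖w1 t‖ ^ 2 + ‖w2 t‖ ^ 2) + δ ^ 2 * b * 1) t := by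
        intro t ht
        exact (hF t ht).add ((hasDerivAt_id t).const_mul (δ ^ 2 * b))
      have hG : AntitoneOn (fun t => f ⟪w2 t, w1 t⟫ + δ ^ 2 * b * t) (Ici 0) := by
        apply antitoneOn_of_deriv_nonpos (convex_Ici 0)
        · exact fun t ht => ((hG' t ht).continuousAt).continuousWithinAt
        · rw [interior_Ici]
          exact fun t ht => ((hG' t ht.le).differentiableAt).differentiableWithinAt
        · intro t ht
          rw [interior_Ici] at ht
          rw [(hG' t ht.le).deriv]
          have h1 : δ ≤ |deriv f ⟪w2 t, w1 t⟫| := hz₀min _ (hxK t ht.le)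
          have h2 : b ≤ ‖w1 t‖ ^ 2 + ‖w2 t‖ ^ 2 := hbS t ht.le
          have h3 : δ ^ 2 ≤ deriv f ⟪w2 t, w1 t⟫ ^ 2 := by
            rw [← sq_abs (deriv f ⟪w2 t, w1 t⟫)]
            exact pow_le_pow_left₀ hδ.le h1 2
          have h4 : δ ^ 2 * b ≤ deriv f ⟪w2 t, w1 t⟫ ^ 2 * (‖w1 t‖ ^ 2 + ‖w2 t‖ ^ 2) :=
            mul_le_mul h3 h2 hb.le (sq_nonneg _)
          linarith
      have hc : 0 < δ ^ 2 * b := by positivity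
      set T : ℝ := (f ⟪w2 0, w1 0⟫ - fmin + 1) / (δ ^ 2 * b) with hTdef
      have hnum : 0 < f ⟪w2 0, w1 0⟫ - fmin + 1 := by linarith [hfmin_le (⟪w2 0, w1 0⟫ : ℝ)]
      have hT0 : 0 ≤ T := le_of_lt (div_pos hnum hc)
      have hGT := hG self_mem_Ici hT0 hT0
      have hcT : δ ^ 2 * b * T = f ⟪w2 0, w1 0⟫ - fmin + 1 := by
        rw [hTdef, mul_div_cancel₀ _ hc.ne']
      have hlow := hfmin_le (⟪w2 T, w1 T⟫ : ℝ)
      simp only [mul_zero, add_zero] at hGT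
      linarith
    rw [Metric.tendsto_atTop]
    intro ε hε
    obtain ⟨t₀, ht₀, hlt⟩ := key ε hε
    refine ⟨t₀, fun t ht => ?_⟩
    have h1 : f ⟪w2 t, w1 t⟫ ≤ f ⟪w2 t₀, w1 t₀⟫ := hFanti ht₀ (le_trans ht₀ ht) ht
    have h2 : fmin ≤ f ⟪w2 t, w1 t⟫ := hfmin_le _
    rw [Real.dist_eq, abs_lt]
    constructor <;> linarith
  -- monotonicity along the sign direction
  have hmono_s : ∀ z : ℝ, 0 ≤ s * z → f 0 ≤ f z := by
    rcases hs1 with h | h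
    · intro z hz
      rw [h, one_mul] at hz
      have hpos : 0 < deriv f 0 := by rw [h, one_mul] at hsd; exact hsd
      exact aux_mono f fmin hdiff hcd hcrit hf0 hpos z hz
    · intro z hz
      rw [h] at hz
      have hz' : 0 ≤ -z := by linarith [hz]
      have hneg : deriv f 0 < 0 := by
        rw [h] at hsd; nlinarith
      -- apply aux_mono to the reflected function
      set g : ℝ → ℝ := fun z => f (-z) with hgdef
      have hgd : Differentiable ℝ g := hdiff.comp differentiable_neg
      have hgderiv : ∀ z, deriv g z = -deriv f (-z) := by
        intro z
        have h1 : HasDerivAt g (deriv f (-z) * (-1)) z :=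
          (hdiff (-z)).hasDerivAt.comp z (hasDerivAt_neg z)
        rw [h1.deriv]; ring
      have hgcd : Continuous (deriv g) := by
        have : (deriv g) = fun z => -deriv f (-z) := funext hgderiv
        rw [this]
        exact (hcd.comp continuous_neg).neg
      have hgcrit : ∀ z, deriv g z = 0 → g z = fmin := by
        intro z hz
        rw [hgderiv] at hz
        exact hcrit (-z) (by linarith [neg_eq_zero.1 hz])
      have hg0 : fmin < g 0 := by simp only [hgdef, neg_zero]; exact hf0
      have hgpos : 0 < deriv g 0 := by rw [hgderiv, neg_zero]; linarith
      have := aux_mono g fmin hgd hgcd hgcrit hg0 hgpos (-z) hz'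
      simpa [hgdef] using this
  constructor
  · -- forward direction, by contradiction
    intro htend
    by_contra hnot
    push_neg at hnot
    have hu0 : w1 0 - s • w2 0 = 0 := norm_le_zero_iff.1 hnot
    have hueq : ∀ t, 0 ≤ t → w1 t - s • w2 t = 0 :=
      aux_gronwall_zero _ _ hgc hu hu0
    have hge : ∀ t, 0 ≤ t → f 0 ≤ f ⟪w2 t, w1 t⟫ := by
      intro t ht
      apply hmono_s
      have h1 : w1 t = s • w2 t := sub_eq_zero.1 (hueq t ht)
      rw [h1, real_inner_smul_right, real_inner_self_eq_norm_sq, ← mul_assoc, hss, one_mul]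
      positivity
    have hfge : f 0 ≤ fmin := by
      apply ge_of_tendsto htend
      filter_upwards [eventually_ge_atTop (0:ℝ)] with t ht
      exact hge t ht
    linarith
  · -- reverse direction
    intro hpos
    by_cases hv0 : w1 0 + s • w2 0 = 0
    · -- degenerate case `v ≡ 0`: confinement argument
      have hveq : ∀ t, 0 ≤ t → w1 t + s • w2 t = 0 :=
        aux_gronwall_zero _ _ hgc.neg hv hv0
      have hw2e : ∀ t, 0 ≤ t → w2 t = -(s • w1 t) := by
        intro t ht
        have h := hveq t ht
        have h2 : s • w1 t + (s * s) • w2 t = 0 := by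
          have := congrArg (fun z : EVec k => s • z) h
          simpa [smul_add, smul_smul] using this
        rw [hss, one_smul] at h2
        exact eq_neg_of_add_eq_zero_right h2
      have hxneg : ∀ t, 0 ≤ t → s * ⟪w2 t, w1 t⟫ = -‖w1 t‖ ^ 2 := by
        intro t ht
        rw [hw2e t ht, inner_neg_left, real_inner_smul_left, real_inner_self_eq_norm_sq]
        linear_combination (-(‖w1 t‖ ^ 2)) * hss
      have hw2norm : ∀ t, 0 ≤ t → ‖w2 t‖ = ‖w1 t‖ := by
        intro t ht
        rw [hw2e t ht, norm_neg, norm_smul, Real.norm_eq_abs, habs, one_mul]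
      have hw10 : w1 0 ≠ 0 := by
        intro h
        apply absurd hpos
        rw [h] at hv0 ⊢
        simp only [zero_add] at hv0
        rw [zero_sub, hv0]
        simp
      -- a neighborhood of 0 where s * f' > 0
      obtain ⟨d, hd, hball⟩ : ∃ d : ℝ, 0 < d ∧ ∀ z : ℝ, |z| ≤ d → 0 < s * deriv f z := by
        have hcont0 : ContinuousAt (fun z => s * deriv f z) 0 :=
          (continuous_const.mul hcd).continuousAt
        have hnhds : (fun z => s * deriv f z) ⁻¹' Ioi 0 ∈ nhds (0:ℝ) :=
          hcont0.preimage_mem_nhds (Ioi_mem_nhds hsd)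
        obtain ⟨ε, hε, hsub⟩ := Metric.mem_nhds_iff.1 hnhds
        refine ⟨ε / 2, by linarith, fun z hz => ?_⟩
        have : z ∈ Metric.ball (0:ℝ) ε := by
          rw [Metric.mem_ball, Real.dist_eq, sub_zero]
          linarith [hz]
        exact hsub this
      set M : ℝ := max (-(‖w1 0‖ ^ 2)) (-d) with hMdef
      have hM : M < 0 := by
        apply max_lt
        · have : 0 < ‖w1 0‖ ^ 2 := pow_pos (norm_pos_iff.2 hw10) 2
          linarith
        · linarith
      -- barrier: s * x t ≤ M for all t ≥ 0
      have hbar : ∀ t, 0 ≤ t → s * ⟪w2 t, w1 t⟫ ≤ M := by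
        intro tst htst
        by_contra hgt
        push_neg at hgt
        set y : ℝ → ℝ := fun t => s * ⟪w2 t, w1 t⟫ with hydef
        have hyc : ContinuousOn y (Ici 0) := continuousOn_const.mul hxc
        set E : Set ℝ := Icc 0 tst ∩ y ⁻¹' (Iic M) with hEdef
        have hE0 : (0:ℝ) ∈ E := by
          refine ⟨⟨le_rfl, htst⟩, ?_⟩
          simp only [mem_preimage, mem_Iic]
          rw [hydef]; dsimp only
          rw [hxneg 0 le_rfl]
          exact le_max_left _ _
        have hEclosed : IsClosed E :=
          (hyc.mono Icc_subset_Ici_self).preimage_isClosed_of_isClosed isClosed_Icc isClosed_Iic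
        have hEc : IsCompact E := isCompact_Icc.of_isClosed_subset hEclosed inter_subset_left
        have hTmem : sSup E ∈ E := hEc.sSup_mem ⟨0, hE0⟩
        set T : ℝ := sSup E with hTdef
        have hT0 : 0 ≤ T := hTmem.1.1
        have hyT : y T ≤ M := hTmem.2
        have hTlt : T < tst := by
          rcases hTmem.1.2.eq_or_lt with h | h
          · exfalso; rw [h] at hyT; rw [hydef] at hyT; dsimp only at hyT; linarith
          · exact h
        have hcross : ∀ τ, τ ∈ Ioc T tst → M < y τ := by
          intro τ hτ
          by_contra hle
          push_neg at hle
          have hτE : τ ∈ E := ⟨⟨le_trans hT0 hτ.1.le, hτ.2⟩, hle⟩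
          have := le_csSup hEc.bddAbove hτE
          linarith [hτ.1]
        have hy' : ∀ τ : ℝ, 0 ≤ τ → HasDerivAt y
            (s * (-(deriv f ⟪w2 τ, w1 τ⟫) * (‖w1 τ‖ ^ 2 + ‖w2 τ‖ ^ 2))) τ := by
          intro τ hτ
          exact (hx τ hτ).const_mul s
        have hanti : AntitoneOn y (Icc T tst) := by
          apply antitoneOn_of_deriv_nonpos (convex_Icc T tst)
          · exact hyc.mono fun τ hτ => le_trans hT0 hτ.1
          · rw [interior_Icc]
            intro τ hτ
            exact ((hy' τ (le_trans hT0 hτ.1.le)).differentiableAt).differentiableWithinAt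
          · intro τ hτ
            rw [interior_Icc] at hτ
            have hτ0 : 0 ≤ τ := le_trans hT0 hτ.1.le
            rw [(hy' τ hτ0).deriv]
            have h1 : y τ = -‖w1 τ‖ ^ 2 := hxneg τ hτ0
            have h2 : ‖w2 τ‖ = ‖w1 τ‖ := hw2norm τ hτ0
            have hyM : M < y τ := hcross τ ⟨hτ.1, hτ.2.le⟩
            have hxd : |(⟪w2 τ, w1 τ⟫ : ℝ)| ≤ d := by
              have hyabs : |y τ| ≤ d := by
                rw [abs_le]
                constructor
                · have : -d ≤ M := le_max_right _ _
                  linarith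
                · rw [h1]; nlinarith [sq_nonneg ‖w1 τ‖]
              have : |y τ| = |(⟪w2 τ, w1 τ⟫ : ℝ)| := by
                rw [hydef]; dsimp only; rw [abs_mul, habs, one_mul]
              linarith [this ▸ hyabs]
            have hpos' : 0 < s * deriv f ⟪w2 τ, w1 τ⟫ := hball _ hxd
            have hyle : y τ ≤ 0 := by rw [h1]; nlinarith [sq_nonneg ‖w1 τ‖]
            have hyval : s * ⟪w2 τ, w1 τ⟫ = y τ := rfl
            rw [h2]
            nlinarith [mul_nonneg hpos'.le (sq_nonneg ‖w1 τ‖), hxneg τ hτ0]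
        have h1 := hanti (left_mem_Icc.2 hTlt.le) (right_mem_Icc.2 hTlt.le) hTlt.le
        have : y tst ≤ M := le_trans h1 hyT
        rw [hydef] at this; dsimp only at this
        linarith
      -- now apply the master lemma with b = -2M
      apply main (-2 * M) (by linarith)
      intro t ht
      have h1 := hxneg t ht
      have h2 := hw2norm t ht
      have h3 := hbar t ht
      rw [h2]
      nlinarith
    · -- generic case: the conserved quantity ‖u‖‖v‖ is positive
      -- norm-squared derivatives
      have hBd : ∀ t, 0 ≤ t → HasDerivAt (fun t => ‖w1 t - s • w2 t‖ ^ 2)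
          (2 * (s * deriv f ⟪w2 t, w1 t⟫) * ‖w1 t - s • w2 t‖ ^ 2) t := by
        intro t ht
        have h := (hu t ht).inner ℝ (hu t ht)
        simp only [← real_inner_self_eq_norm_sq]
        refine h.congr_deriv ?_
        rw [real_inner_smul_left, real_inner_smul_right]
        ring
      have hCd : ∀ t, 0 ≤ t → HasDerivAt (fun t => ‖w1 t + s • w2 t‖ ^ 2)
          (-(2 * (s * deriv f ⟪w2 t, w1 t⟫)) * ‖w1 t + s • w2 t‖ ^ 2) t := by
        intro t ht
        have h := (hv t ht).inner ℝ (hv t ht)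
        simp only [← real_inner_self_eq_norm_sq]
        refine h.congr_deriv ?_
        rw [real_inner_smul_left, real_inner_smul_right]
        ring
      have hAc : ∀ t, 0 ≤ t →
          ‖w1 t - s • w2 t‖ ^ 2 * ‖w1 t + s • w2 t‖ ^ 2 =
          ‖w1 0 - s • w2 0‖ ^ 2 * ‖w1 0 + s • w2 0‖ ^ 2 := by
        intro T hT
        have hconst := constant_of_has_deriv_right_zero
          (f := fun t => ‖w1 t - s • w2 t‖ ^ 2 * ‖w1 t + s • w2 t‖ ^ 2) (a := 0) (b := T)
          (fun τ hτ => (((hBd τ hτ.1).mul (hCd τ hτ.1)).continuousAt).continuousWithinAt)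
          (fun τ hτ => by
            have h := (hBd τ hτ.1).mul (hCd τ hτ.1)
            have heq : 2 * (s * deriv f ⟪w2 τ, w1 τ⟫) * ‖w1 τ - s • w2 τ‖ ^ 2 *
                ‖w1 τ + s • w2 τ‖ ^ 2 + ‖w1 τ - s • w2 τ‖ ^ 2 *
                (-(2 * (s * deriv f ⟪w2 τ, w1 τ⟫)) * ‖w1 τ + s • w2 τ‖ ^ 2) = 0 := by ring
            rw [heq] at h
            exact h.hasDerivWithinAt)
        exact hconst T ⟨hT, le_rfl⟩
      have hprod : ∀ t, 0 ≤ t →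
          ‖w1 t - s • w2 t‖ * ‖w1 t + s • w2 t‖ = ‖w1 0 - s • w2 0‖ * ‖w1 0 + s • w2 0‖ := by
        intro t ht
        have hsq : (‖w1 t - s • w2 t‖ * ‖w1 t + s • w2 t‖) ^ 2 =
            (‖w1 0 - s • w2 0‖ * ‖w1 0 + s • w2 0‖) ^ 2 := by
          rw [mul_pow, mul_pow]; exact hAc t ht
        have h1 : (0:ℝ) ≤ ‖w1 t - s • w2 t‖ * ‖w1 t + s • w2 t‖ :=
          mul_nonneg (norm_nonneg _) (norm_nonneg _)
        have h2 : (0:ℝ) ≤ ‖w1 0 - s • w2 0‖ * ‖w1 0 + s • w2 0‖ :=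
          mul_nonneg (norm_nonneg _) (norm_nonneg _)
        calc ‖w1 t - s • w2 t‖ * ‖w1 t + s • w2 t‖
            = Real.sqrt ((‖w1 t - s • w2 t‖ * ‖w1 t + s • w2 t‖) ^ 2) := (Real.sqrt_sq h1).symm
          _ = Real.sqrt ((‖w1 0 - s • w2 0‖ * ‖w1 0 + s • w2 0‖) ^ 2) := by rw [hsq]
          _ = ‖w1 0 - s • w2 0‖ * ‖w1 0 + s • w2 0‖ := Real.sqrt_sq h2
      apply main (‖w1 0 - s • w2 0‖ * ‖w1 0 + s • w2 0‖)
      · exact mul_pos hpos (norm_pos_iff.2 hv0)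
      · intro t ht
        rw [← hprod t ht]
        have e1 := norm_add_sq_real (w1 t) (s • w2 t)
        have e2 := norm_sub_sq_real (w1 t) (s • w2 t)
        have e3 : ‖s • w2 t‖ = ‖w2 t‖ := by
          rw [norm_smul, Real.norm_eq_abs, habs, one_mul]
        rw [e3] at e1 e2
        nlinarith [two_mul_le_add_sq ‖w1 t - s • w2 t‖ ‖w1 t + s • w2 t‖,
          mul_nonneg (norm_nonneg (w1 t - s • w2 t)) (norm_nonneg (w1 t + s • w2 t))]
end
end

section
/- Suppose f : ℝ → ℝ is real analytic, bounded below with attained minimum value f_min, proper (every sublevel set is compact), and f(0) > f_min. Let w̄ = (w̄_1, w̄_2) and w̃ = (w̃_1, w̃_2) be two initializations in ℝ^k × ℝ^k such that (i) ⟨w̄_2, w̄_1⟩ = ⟨w̃_2, w̃_1⟩ and (ii) c(w̄) > c(w̃), where c(w) := 2·trace(𝒞(w)²) − trace(𝒞(w))² with 𝒞(w) := w_1 w_1ᵀ − w_2 w_2ᵀ. If the solutions of the vector overparameterized gradient flow initialized at w̄ and at w̃ both exist for all t ≥ 0, then for all t > 0 the cost along the first solution is at most that along the second: f(⟨w_2(t;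 w̄), w_1(t; w̄)⟩) ≤ f(⟨w_2(t; w̃), w_1(t; w̃)⟩). If additionally f'(⟨w̄_2, w̄_1⟩) ≠ 0, the inequality is strict for all t > 0. -/
open scoped RealInnerProductSpace

noncomputable section

/-- The imbalance matrix `𝒞(w) = w₁ w₁ᵀ − w₂ w₂ᵀ`. -/
def imbalMat {k : ℕ} (w1 w2 : EVec k) : Matrix (Fin k) (Fin k) ℝ :=
  Matrix.of fun i j => w1 i * w1 j - w2 i * w2 j

/-- The imbalance measure `c(w) = 2 trace(𝒞(w)²) − trace(𝒞(w))²`. -/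
def imbal {k : ℕ} (w1 w2 : EVec k) : ℝ :=
  2 * (imbalMat w1 w2 * imbalMat w1 w2).trace - (imbalMat w1 w2).trace ^ 2

open Set Filter Topology

namespace Stmt5Aux

def vfield (f : ℝ → ℝ) (c : ℝ) : ℝ → ℝ := fun x => -(deriv f x) * Real.sqrt (c + 4*x^2)

lemma slope_pos_right {u : ℝ → ℝ} {d t0 : ℝ} (h : HasDerivAt u d t0) (h0 : u t0 = 0)
    (hd : 0 < d) : ∀ᶠ t in 𝓝[>] t0, 0 < u t := by
  have hT := hasDerivAt_iff_tendsto_slope.mp h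
  have h1 : ∀ᶠ t in 𝓝[≠] t0, 0 < slope u t0 t := hT.eventually (eventually_gt_nhds hd)
  have h2 : ∀ᶠ t in 𝓝[>] t0, 0 < slope u t0 t :=
    h1.filter_mono (nhdsWithin_mono _ fun t ht => ne_of_gt ht)
  filter_upwards [h2, self_mem_nhdsWithin] with t ht ht'
  rw [slope_def_field, h0, sub_zero] at ht
  have htp : 0 < t - t0 := sub_pos.mpr ht'
  have := mul_pos ht htp
  rwa [div_mul_cancel₀] at this
  exact ne_of_gt htp

lemma slope_neg_right {u : ℝ → ℝ} {d t0 : ℝ} (h : HasDerivAt u d t0) (h0 : u t0 = 0)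
    (hd : d < 0) : ∀ᶠ t in 𝓝[>] t0, u t < 0 := by
  have := slope_pos_right (u := fun t => -(u t)) (h.neg) (by simp [h0]) (by linarith)
  filter_upwards [this] with t ht; linarith

lemma deriv_nonpos_of_pos_left {u : ℝ → ℝ} {d t0 a : ℝ} (h : HasDerivAt u d t0)
    (h0 : u t0 = 0) (ha : a < t0) (hpos : ∀ s ∈ Ioo a t0, 0 < u s) : d ≤ 0 := by
  have hT := hasDerivAt_iff_tendsto_slope.mp h
  have hT' : Tendsto (slope u t0) (𝓝[<] t0) (𝓝 d) :=
    hT.mono_left (nhdsWithin_mono _ fun t ht => ne_of_lt ht)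
  refine le_of_tendsto hT' ?_
  filter_upwards [Ioo_mem_nhdsLT_of_mem (show t0 ∈ Ioc a t0 from ⟨ha, le_rfl⟩)] with s hs
  rw [slope_def_field, h0, sub_zero]
  apply div_nonpos_of_nonneg_of_nonpos (hpos s hs).le
  linarith [hs.2]

lemma sqrt_ge {c x : ℝ} (hc : 0 ≤ c) : 2 * |x| ≤ Real.sqrt (c + 4*x^2) := by
  rw [show (2:ℝ) * |x| = Real.sqrt ((2 * |x|)^2) from (Real.sqrt_sq (by positivity)).symm]
  apply Real.sqrt_le_sqrt
  rw [mul_pow, sq_abs]; nlinarith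

lemma sqrt_lip {c : ℝ} (hc : 0 ≤ c) (x y : ℝ) :
    |Real.sqrt (c + 4*x^2) - Real.sqrt (c + 4*y^2)| ≤ 2 * |x - y| := by
  have key : ∀ a b : ℝ, Real.sqrt (c + 4*a^2) ≤ Real.sqrt (c + 4*b^2) + 2 * |a-b| := by
    intro a b
    have h1 : 2 * |b| ≤ Real.sqrt (c + 4*b^2) := sqrt_ge hc
    have h2 : 0 ≤ Real.sqrt (c + 4*b^2) := Real.sqrt_nonneg _
    have h3 : c + 4*a^2 ≤ (Real.sqrt (c + 4*b^2) + 2 * |a-b|)^2 := by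
      have h4 := Real.sq_sqrt (show (0:ℝ) ≤ c + 4*b^2 by positivity)
      have h5 : (a-b)*b ≤ |a-b| * |b| := by
        rw [← abs_mul]; exact le_abs_self _
      nlinarith [sq_abs (a-b), sq_abs b, abs_nonneg (a-b), abs_nonneg b]
    calc Real.sqrt (c + 4*a^2) ≤ Real.sqrt ((Real.sqrt (c + 4*b^2) + 2 * |a-b|)^2) :=
          Real.sqrt_le_sqrt h3
      _ = Real.sqrt (c + 4*b^2) + 2 * |a-b| := Real.sqrt_sq (by positivity)
  rw [abs_sub_le_iff]
  refine ⟨by linarith [key x y], ?_⟩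
  rw [abs_sub_comm]; linarith [key y x]

lemma deriv_lipOn {f : ℝ → ℝ} (hf : ContDiff ℝ 2 f) (a b : ℝ) :
    ∃ K : ℝ, 0 ≤ K ∧ ∀ x ∈ Icc a b, ∀ y ∈ Icc a b, |deriv f x - deriv f y| ≤ K * |x - y| := by
  have hd1 : ContDiff ℝ 1 (deriv f) := ((contDiff_succ_iff_deriv (n := 1)).mp hf).2.2
  have hdd : Continuous (deriv (deriv f)) := ((contDiff_succ_iff_deriv (n := 0)).mp hd1).2.2.continuous
  obtain ⟨M, hM⟩ := (isCompact_Icc (a := a) (b := b)).exists_bound_of_continuousOn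
    (hdd.continuousOn (s := Icc a b))
  refine ⟨max M 0, le_max_right _ _, ?_⟩
  have hlip : LipschitzOnWith (Real.toNNReal M) (deriv f) (Icc a b) := by
    apply Convex.lipschitzOnWith_of_nnnorm_deriv_le (𝕜 := ℝ)
      (fun x _ => (hd1.differentiable one_ne_zero).differentiableAt) ?_ (convex_Icc a b)
    intro x hx
    have h := hM x hx
    rw [← NNReal.coe_le_coe, coe_nnnorm, Real.norm_eq_abs, Real.coe_toNNReal']
    exact le_trans (by simpa [Real.norm_eq_abs] using h) (le_max_left _ _)
  intro x hx y hy
  have h2 := hlip.dist_le_mul x hx y hy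
  rw [Real.dist_eq, Real.dist_eq] at h2
  refine le_trans h2 (mul_le_mul_of_nonneg_right ?_ (abs_nonneg _))
  rw [Real.coe_toNNReal']

lemma vfield_lipOn {f : ℝ → ℝ} (hf : ContDiff ℝ 2 f) {c : ℝ} (hc : 0 ≤ c) (a b : ℝ) :
    ∃ K : NNReal, LipschitzOnWith K (vfield f c) (Icc a b) := by
  obtain ⟨K1, hK1, hlip⟩ := deriv_lipOn hf a b
  have hd1 : ContDiff ℝ 1 (deriv f) := ((contDiff_succ_iff_deriv (n := 1)).mp hf).2.2
  have hcont : ContinuousOn (fun x => |deriv f x| + Real.sqrt (c + 4*x^2)) (Icc a b) :=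
    (hd1.continuous.abs.add ((Real.continuous_sqrt).comp
      (by continuity : Continuous (fun x : ℝ => c + 4*x^2)))).continuousOn
  obtain ⟨M, hM⟩ := (isCompact_Icc (a := a) (b := b)).exists_bound_of_continuousOn hcont
  have hMpos : ∀ x ∈ Icc a b, |deriv f x| ≤ M ∧ Real.sqrt (c + 4*x^2) ≤ M := by
    intro x hx
    have h := hM x hx
    rw [Real.norm_eq_abs, abs_le] at h
    have h1 : 0 ≤ Real.sqrt (c + 4*x^2) := Real.sqrt_nonneg _
    have h2 : 0 ≤ |deriv f x| := abs_nonneg _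
    constructor <;> linarith [h.2]
  refine ⟨Real.toNNReal (2*M + K1*M), ?_⟩
  rw [lipschitzOnWith_iff_dist_le_mul]
  intro x hx y hy
  rw [Real.dist_eq, Real.dist_eq]
  have hMx := hMpos x hx
  have hMy := hMpos y hy
  have key : |vfield f c x - vfield f c y| ≤ (2*M + K1*M) * |x - y| := by
    have e : vfield f c x - vfield f c y =
        -(deriv f x) * (Real.sqrt (c + 4*x^2) - Real.sqrt (c + 4*y^2))
        + (deriv f y - deriv f x) * Real.sqrt (c + 4*y^2) := by
      simp only [vfield]; ring
    rw [e]
    have t1 : |(-(deriv f x)) * (Real.sqrt (c + 4*x^2) - Real.sqrt (c + 4*y^2))| ≤ M * (2 * |x-y|) := by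
      rw [abs_mul, abs_neg]
      exact mul_le_mul hMx.1 (sqrt_lip hc x y) (abs_nonneg _) (le_trans (abs_nonneg _) hMx.1)
    have t2 : |(deriv f y - deriv f x) * Real.sqrt (c + 4*y^2)| ≤ (K1 * |y-x|) * M := by
      rw [abs_mul]
      refine mul_le_mul (hlip y hy x hx) ?_ (abs_nonneg _) (by positivity)
      rw [abs_of_nonneg (Real.sqrt_nonneg _)]; exact hMy.2
    calc _ ≤ _ := abs_add_le _ _
      _ ≤ M * (2 * |x-y|) + (K1 * |y-x|) * M := add_le_add t1 t2
      _ = (2*M + K1*M) * |x - y| := by rw [abs_sub_comm y x]; ring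
  refine le_trans key (mul_le_mul_of_nonneg_right ?_ (abs_nonneg _))
  rw [Real.coe_toNNReal']
  exact le_max_left _ _

lemma sol_cont {x : ℝ → ℝ} {f : ℝ → ℝ} {c : ℝ}
    (hx : ∀ t, 0 ≤ t → HasDerivAt x (vfield f c (x t)) t) {lo hi : ℝ} (hlo : 0 ≤ lo) :
    ContinuousOn x (Icc lo hi) := fun t ht =>
  ((hx t (le_trans hlo ht.1)).continuousAt).continuousWithinAt

lemma sol_eq_const {f : ℝ → ℝ} (hf : ContDiff ℝ 2 f) {c : ℝ} (hc : 0 ≤ c)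
    {x : ℝ → ℝ} (hx : ∀ t, 0 ≤ t → HasDerivAt x (vfield f c (x t)) t)
    {z t1 : ℝ} (ht1 : 0 ≤ t1) (hz : vfield f c z = 0) (hxz : x t1 = z) :
    ∀ t, 0 ≤ t → x t = z := by
  intro t ht
  -- work on the interval [0, T]
  set T := max t t1 with hT
  have hTt : t ≤ T := le_max_left _ _
  have hTt1 : t1 ≤ T := le_max_right _ _
  have hT0 : 0 ≤ T := le_trans ht hTt
  have hcont : ContinuousOn x (Icc 0 T) := sol_cont hx le_rfl
  obtain ⟨B, hB⟩ := (isCompact_Icc (a := (0:ℝ)) (b := T)).exists_bound_of_continuousOn hcont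
  set b : ℝ := |B| + |z| with hb
  have hzb : z ∈ Icc (-b) b := by
    constructor <;> [linarith [abs_nonneg B, neg_abs_le z]; linarith [abs_nonneg B, le_abs_self z]]
  have hxb : ∀ s ∈ Icc 0 T, x s ∈ Icc (-b) b := by
    intro s hs
    have := hB s hs
    rw [Real.norm_eq_abs] at this
    have h1 := neg_abs_le (x s)
    have h2 := le_abs_self (x s)
    have h3 := le_abs_self B
    have h4 := abs_nonneg z
    constructor <;> simp only [hb] <;> linarith
  obtain ⟨K, hK⟩ := vfield_lipOn hf hc (-b) b
  have hgz : ∀ s ∈ Icc (0:ℝ) T, (fun _ : ℝ => z) s ∈ Icc (-b) b := fun _ _ => hzb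
  have hgc : ContinuousOn (fun _ : ℝ => z) (Icc 0 T) := continuousOn_const
  have hgd : ∀ s : ℝ, HasDerivAt (fun _ : ℝ => z) (vfield f c z) s := by
    intro s; rw [hz]; exact hasDerivAt_const s z
  rcases le_total t t1 with hc1 | hc1
  · -- backward: interval [t, t1]
    have heq := ODE_solution_unique_of_mem_Icc_left (v := fun _ => vfield f c)
      (s := fun _ => Icc (-b) b) (K := K) (fun _ _ => hK)
      (hcont.mono (Icc_subset_Icc ht hTt1))
      (fun s hs => (hx s (le_trans ht hs.1.le)).hasDerivWithinAt)
      (fun s hs => hxb s ⟨le_trans ht hs.1.le, le_trans hs.2 hTt1⟩)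
      (hgc.mono (Icc_subset_Icc ht hTt1))
      (fun s _ => (hgd s).hasDerivWithinAt)
      (fun s hs => hzb)
      (by simpa using hxz)
    exact heq ⟨le_rfl, hc1⟩
  · -- forward: interval [t1, t]
    have heq := ODE_solution_unique_of_mem_Icc_right (v := fun _ => vfield f c)
      (s := fun _ => Icc (-b) b) (K := K) (fun _ _ => hK)
      (hcont.mono (Icc_subset_Icc ht1 hTt))
      (fun s hs => (hx s (le_trans ht1 hs.1)).hasDerivWithinAt)
      (fun s hs => hxb s ⟨le_trans ht1 hs.1, le_trans hs.2.le hTt⟩)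
      (hgc.mono (Icc_subset_Icc ht1 hTt))
      (fun s _ => (hgd s).hasDerivWithinAt)
      (fun s hs => hzb)
      (by simpa using hxz)
    exact heq ⟨hc1, le_rfl⟩

lemma exists_zstar {f : ℝ → ℝ} (hf : ContDiff ℝ 2 f)
    (hproper : ∀ c : ℝ, IsCompact {z : ℝ | f z ≤ c})
    {x0 : ℝ} (hx0 : 0 < deriv f x0) :
    ∃ zs, zs < x0 ∧ deriv f zs = 0 ∧ ∀ u, zs < u → u ≤ x0 → 0 < deriv f u := by
  have hdiff : Differentiable ℝ f := hf.differentiable (by norm_num)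
  have hcont : Continuous (deriv f) :=
    (((contDiff_succ_iff_deriv (n := 1)).mp hf).2.2).continuous
  set Z := {z : ℝ | z ≤ x0 ∧ deriv f z = 0} with hZ
  have hZclosed : IsClosed Z := by
    have : Z = Iic x0 ∩ deriv f ⁻¹' {0} := by ext z; simp [hZ]
    rw [this]
    exact isClosed_Iic.inter (isClosed_singleton.preimage hcont)
  have hZbdd : BddAbove Z := ⟨x0, fun z hz => hz.1⟩
  -- Z is nonempty
  have hZne : Z.Nonempty := by
    by_contra hne
    rw [Set.not_nonempty_iff_eq_empty] at hne
    have hpos : ∀ z ≤ x0, 0 < deriv f z := by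
      intro z hz
      rcases lt_trichotomy (deriv f z) 0 with h | h | h
      · -- IVT gives a zero between z and x0
        have hzx : z ≤ x0 := hz
        have := intermediate_value_Icc hzx (hcont.continuousOn (s := Icc z x0))
        have h0 : (0:ℝ) ∈ Icc (deriv f z) (deriv f x0) := ⟨h.le, hx0.le⟩
        obtain ⟨u, hu, hu0⟩ := this h0
        exfalso
        have hmem2 : u ∈ Z := ⟨hu.2, hu0⟩
        rw [hne] at hmem2
        exact Set.notMem_empty u hmem2
      · exfalso
        have : z ∈ Z := ⟨hz, h⟩
        rw [hne] at this; exact absurd this (Set.notMem_empty z)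
      · exact h
    -- f strictly monotone on Iic x0
    have hmono : StrictMonoOn f (Iic x0) := by
      apply strictMonoOn_of_deriv_pos (convex_Iic x0) (hdiff.continuous.continuousOn)
      intro u hu
      rw [interior_Iic] at hu
      exact hpos u hu.le
    -- then Iic (x0 - 1) ⊆ sublevel set of f (x0 - 1), contradicting compactness
    have hsub : Iic (x0 - 1) ⊆ {z : ℝ | f z ≤ f (x0 - 1)} := by
      intro y hy
      rcases eq_or_lt_of_le (show y ≤ x0 - 1 from hy) with h | h
      · simp [h]
      · exact le_of_lt (hmono (by simp; linarith) (by simp) h)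
    have hbdd := (hproper (f (x0 - 1))).isBounded
    obtain ⟨C, hC⟩ := (isBounded_iff_forall_norm_le).mp hbdd
    have hymem : min (x0 - 1) (-C - 1) ∈ Iic (x0 - 1) := mem_Iic.mpr (min_le_left _ _)
    have := hC _ (hsub hymem)
    rw [Real.norm_eq_abs] at this
    have h1 : min (x0 - 1) (-C - 1) ≤ -C - 1 := min_le_right _ _
    have h2 := neg_abs_le (min (x0 - 1) (-C - 1))
    linarith
  set zs := sSup Z with hzs
  have hmem : zs ∈ Z := hZclosed.csSup_mem hZne hZbdd
  have hlt : zs < x0 := lt_of_le_of_ne hmem.1 (by intro h; rw [h] at hmem; linarith [hmem.2, hx0])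
  refine ⟨zs, hlt, hmem.2, ?_⟩
  intro u hu hux0
  rcases lt_trichotomy (deriv f u) 0 with h | h | h
  · obtain ⟨w, hw, hw0⟩ := intermediate_value_Icc hux0 (hcont.continuousOn (s := Icc u x0))
      (⟨h.le, hx0.le⟩ : (0:ℝ) ∈ Icc (deriv f u) (deriv f x0))
    have : w ∈ Z := ⟨hw.2, hw0⟩
    have := le_csSup hZbdd this
    linarith [hw.1]
  · exfalso
    have : u ∈ Z := ⟨hux0, h⟩
    have := le_csSup hZbdd this
    linarith
  · exact h

lemma sol_upper {f : ℝ → ℝ} {c : ℝ}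
    {x : ℝ → ℝ} (hx : ∀ t, 0 ≤ t → HasDerivAt x (vfield f c (x t)) t)
    (hneg : vfield f c (x 0) < 0) : ∀ t, 0 ≤ t → x t ≤ x 0 := by
  intro t1 ht1
  by_contra hgt
  push_neg at hgt
  have ht1' : 0 < t1 := by
    rcases eq_or_lt_of_le ht1 with h | h
    · exfalso; rw [← h] at hgt; exact lt_irrefl _ hgt
    · exact h
  set A := Icc 0 t1 ∩ x ⁻¹' (Iic (x 0)) with hA
  have hcont : ContinuousOn x (Icc 0 t1) := sol_cont hx le_rfl
  have hAclosed : IsClosed A := hcont.preimage_isClosed_of_isClosed isClosed_Icc isClosed_Iic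
  have hAne : A.Nonempty := ⟨0, ⟨le_rfl, ht1⟩, mem_preimage.mpr (mem_Iic.mpr le_rfl)⟩
  have hAbdd : BddAbove A := ⟨t1, fun s hs => hs.1.2⟩
  set t2 := sSup A with ht2
  have ht2mem : t2 ∈ A := hAclosed.csSup_mem hAne hAbdd
  have ht2le : x t2 ≤ x 0 := ht2mem.2
  have ht2nonneg : 0 ≤ t2 := ht2mem.1.1
  have ht2lt : t2 < t1 := lt_of_le_of_ne ht2mem.1.2 (by
    intro h; rw [h] at ht2le; linarith)
  have hgt' : ∀ s, t2 < s → s ≤ t1 → x 0 < x s := by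
    intro s hs hs'
    by_contra hle
    push_neg at hle
    have : s ∈ A := ⟨⟨le_trans ht2nonneg hs.le, hs'⟩, hle⟩
    exact absurd (le_csSup hAbdd this) (not_le.mpr hs)
  -- x t2 = x 0 by right continuity
  have ht2eq : x t2 = x 0 := by
    refine le_antisymm ht2le ?_
    have htend : Tendsto x (𝓝[>] t2) (𝓝 (x t2)) :=
      ((hx t2 ht2nonneg).continuousAt.tendsto).mono_left nhdsWithin_le_nhds
    refine ge_of_tendsto htend ?_
    filter_upwards [Ioc_mem_nhdsGT_of_mem (⟨le_rfl, ht2lt⟩ : t2 ∈ Ico t2 t1)] with s hs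
    exact (hgt' s hs.1 hs.2).le
  -- derivative at t2 is negative, so x < x 0 just to the right: contradiction
  have hder : HasDerivAt (fun s => x s - x 0) (vfield f c (x t2)) t2 :=
    (hx t2 ht2nonneg).sub_const (x 0)
  have hevneg := slope_neg_right hder (by rw [ht2eq]; ring) (by rw [ht2eq]; exact hneg)
  have hev2 : ∀ᶠ s in 𝓝[>] t2, x 0 < x s := by
    filter_upwards [Ioc_mem_nhdsGT_of_mem (⟨le_rfl, ht2lt⟩ : t2 ∈ Ico t2 t1)] with s hs
    exact hgt' s hs.1 hs.2
  obtain ⟨s, hs1, hs2⟩ := (hevneg.and hev2).exists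
  linarith

lemma sol_lower {f : ℝ → ℝ} (hf : ContDiff ℝ 2 f) {c : ℝ} (hc : 0 ≤ c)
    {x : ℝ → ℝ} (hx : ∀ t, 0 ≤ t → HasDerivAt x (vfield f c (x t)) t)
    {zs : ℝ} (hvzs : vfield f c zs = 0) (hzs : zs < x 0) : ∀ t, 0 ≤ t → zs < x t := by
  intro t1 ht1
  by_contra hle
  push_neg at hle
  have hcont : ContinuousOn x (Icc 0 t1) := sol_cont hx le_rfl
  obtain ⟨t0, ht0, ht0eq⟩ := intermediate_value_Icc' ht1 hcont (⟨hle, hzs.le⟩ : zs ∈ Icc (x t1) (x 0))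
  have := sol_eq_const hf hc hx ht0.1 hvzs ht0eq 0 le_rfl
  linarith

lemma main_pos {f : ℝ → ℝ} (hf : ContDiff ℝ 2 f)
    (hproper : ∀ c : ℝ, IsCompact {z : ℝ | f z ≤ c})
    {cb ct x0 : ℝ} (hct : 0 ≤ ct) (hcbt : ct < cb) (hx0 : 0 < deriv f x0)
    {xb xt : ℝ → ℝ} (hxb0 : xb 0 = x0) (hxt0 : xt 0 = x0)
    (hxb : ∀ t, 0 ≤ t → HasDerivAt xb (vfield f cb (xb t)) t)
    (hxt : ∀ t, 0 ≤ t → HasDerivAt xt (vfield f ct (xt t)) t) :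
    ∀ t, 0 < t → f (xb t) < f (xt t) := by
  have hcb : 0 < cb := lt_of_le_of_lt hct hcbt
  obtain ⟨zs, hzslt, hzs0, hzspos⟩ := exists_zstar hf hproper hx0
  have hvzsb : vfield f cb zs = 0 := by simp [vfield, hzs0]
  have hvzst : vfield f ct zs = 0 := by simp [vfield, hzs0]
  -- bounds for xb
  have hsqb : 0 < Real.sqrt (cb + 4*x0^2) := Real.sqrt_pos.mpr (by nlinarith)
  have hnegb : vfield f cb (xb 0) < 0 := by
    rw [hxb0]; simp only [vfield]
    have := mul_pos hx0 hsqb; nlinarith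
  have hub : ∀ t, 0 ≤ t → xb t ≤ x0 := by
    intro t ht; rw [← hxb0]; exact sol_upper hxb hnegb t ht
  have hlb : ∀ t, 0 ≤ t → zs < xb t :=
    sol_lower hf hcb.le hxb hvzsb (by rw [hxb0]; exact hzslt)
  -- bounds for xt
  have hut : ∀ t, 0 ≤ t → xt t ≤ x0 := by
    rcases eq_or_lt_of_le (Real.sqrt_nonneg (ct + 4*x0^2)) with h | h
    · -- vfield f ct x0 = 0 : xt is constant
      have hconst := sol_eq_const hf hct hxt le_rfl
        (show vfield f ct x0 = 0 by simp [vfield, ← h]) hxt0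
      intro t ht; rw [hconst t ht]
    · have hnegt : vfield f ct (xt 0) < 0 := by
        rw [hxt0]; simp only [vfield]
        have := mul_pos hx0 h; nlinarith
      intro t ht; rw [← hxt0]; exact sol_upper hxt hnegt t ht
  have hlt : ∀ t, 0 ≤ t → zs < xt t :=
    sol_lower hf hct hxt hvzst (by rw [hxt0]; exact hzslt)
  -- the difference h = xt - xb
  set h : ℝ → ℝ := fun t => xt t - xb t with hh
  have hd : ∀ t, 0 ≤ t → HasDerivAt h (vfield f ct (xt t) - vfield f cb (xb t)) t :=
    fun t ht => (hxt t ht).sub (hxb t ht)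
  have hdiffpos : ∀ u : ℝ, zs < u → u ≤ x0 →
      0 < vfield f ct u - vfield f cb u := by
    intro u hu1 hu2
    simp only [vfield]
    have hfu : 0 < deriv f u := hzspos u hu1 hu2
    have hsq : Real.sqrt (ct + 4*u^2) < Real.sqrt (cb + 4*u^2) :=
      Real.sqrt_lt_sqrt (by nlinarith) (by nlinarith)
    nlinarith
  have h0 : h 0 = 0 := by simp [hh, hxb0, hxt0]
  have hd0pos : 0 < vfield f ct (xt 0) - vfield f cb (xb 0) := by
    rw [hxb0, hxt0]; exact hdiffpos x0 hzslt le_rfl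
  -- h is eventually positive to the right of 0
  have hev := slope_pos_right (hd 0 le_rfl) h0 hd0pos
  rw [eventually_iff, mem_nhdsGT_iff_exists_Ioc_subset] at hev
  obtain ⟨ε, hε, hIoc⟩ := hev
  rw [mem_Ioi] at hε
  -- main positivity claim
  have hmain : ∀ t, 0 < t → 0 < h t := by
    by_contra hcon
    push_neg at hcon
    obtain ⟨t1, ht1pos, ht1le⟩ := hcon
    have ht1eps : ε < t1 := by
      by_contra hle'
      push_neg at hle'
      exact absurd (hIoc ⟨ht1pos, hle'⟩) (not_lt.mpr ht1le)
    set A := Icc ε t1 ∩ h ⁻¹' (Iic 0) with hA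
    have hconth : ContinuousOn h (Icc ε t1) := fun s hs =>
      (((hd s (le_trans hε.le hs.1)).continuousAt)).continuousWithinAt
    have hAclosed : IsClosed A := hconth.preimage_isClosed_of_isClosed isClosed_Icc isClosed_Iic
    have hAne : A.Nonempty := ⟨t1, ⟨ht1eps.le, le_rfl⟩, mem_preimage.mpr (mem_Iic.mpr ht1le)⟩
    have hAbddb : BddBelow A := ⟨ε, fun s hs => hs.1.1⟩
    set t2 := sInf A with ht2
    have ht2mem : t2 ∈ A := hAclosed.csInf_mem hAne hAbddb
    have ht2eps : ε ≤ t2 := ht2mem.1.1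
    have ht2pos : 0 < t2 := lt_of_lt_of_le hε ht2eps
    have ht2le : h t2 ≤ 0 := ht2mem.2
    -- h > 0 on (0, t2)
    have hposleft : ∀ s, 0 < s → s < t2 → 0 < h s := by
      intro s hs1 hs2
      rcases le_or_gt s ε with hse | hse
      · exact hIoc ⟨hs1, hse⟩
      · by_contra hle'
        push_neg at hle'
        have : s ∈ A := ⟨⟨hse.le, le_trans hs2.le ht2mem.1.2⟩, mem_preimage.mpr (mem_Iic.mpr hle')⟩
        exact absurd (csInf_le hAbddb this) (not_le.mpr hs2)
    -- h t2 = 0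
    have ht2eq : h t2 = 0 := by
      refine le_antisymm ht2le ?_
      have htend : Tendsto h (𝓝[<] t2) (𝓝 (h t2)) :=
        ((hd t2 ht2pos.le).continuousAt.tendsto).mono_left nhdsWithin_le_nhds
      refine ge_of_tendsto htend ?_
      filter_upwards [Ioo_mem_nhdsLT_of_mem (⟨ht2pos, le_rfl⟩ : t2 ∈ Ioc 0 t2)] with s hs
      exact (hposleft s hs.1 hs.2).le
    -- derivative at t2 positive but must be ≤ 0
    have hxeq : xt t2 = xb t2 := by
      have := ht2eq; simp only [hh] at this; linarith
    have hd2pos : 0 < vfield f ct (xt t2) - vfield f cb (xb t2) := by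
      rw [hxeq]
      exact hdiffpos (xb t2) (hlb t2 ht2pos.le) (hub t2 ht2pos.le)
    have hd2nonpos := deriv_nonpos_of_pos_left (hd t2 ht2pos.le) ht2eq ht2pos (fun s hs => hposleft s hs.1 hs.2)
    linarith
  -- conclude via strict monotonicity of f on [zs, x0]
  have hmono : StrictMonoOn f (Icc zs x0) := by
    apply strictMonoOn_of_deriv_pos (convex_Icc zs x0)
      ((hf.differentiable (by norm_num)).continuous.continuousOn)
    intro u hu
    rw [interior_Icc] at hu
    exact hzspos u hu.1 hu.2.le
  intro t ht
  have h1 : xb t ∈ Icc zs x0 := ⟨(hlb t ht.le).le, hub t ht.le⟩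
  have h2 : xt t ∈ Icc zs x0 := ⟨(hlt t ht.le).le, hut t ht.le⟩
  have h3 : xb t < xt t := by have := hmain t ht; simp only [hh] at this; linarith
  exact hmono h1 h2 h3

lemma scalar_main {f : ℝ → ℝ} (hf : ContDiff ℝ 2 f)
    (hproper : ∀ c : ℝ, IsCompact {z : ℝ | f z ≤ c})
    {cb ct x0 : ℝ} (hct : 0 ≤ ct) (hcbt : ct < cb)
    {xb xt : ℝ → ℝ} (hxb0 : xb 0 = x0) (hxt0 : xt 0 = x0)
    (hxb : ∀ t, 0 ≤ t → HasDerivAt xb (vfield f cb (xb t)) t)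
    (hxt : ∀ t, 0 ≤ t → HasDerivAt xt (vfield f ct (xt t)) t) :
    (∀ t, 0 < t → f (xb t) ≤ f (xt t)) ∧
      (deriv f x0 ≠ 0 → ∀ t, 0 < t → f (xb t) < f (xt t)) := by
  have hdiff : Differentiable ℝ f := hf.differentiable (by norm_num)
  rcases lt_trichotomy (deriv f x0) 0 with hneg | hzero | hpos
  · -- reflection
    set F : ℝ → ℝ := fun y => f (-y) with hF
    have hFcd : ContDiff ℝ 2 F := hf.comp (contDiff_id.neg)
    have hderivF : ∀ y : ℝ, deriv F y = -(deriv f (-y)) := by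
      intro y
      have h1 : HasDerivAt F (deriv f (-y) * (-1)) y :=
        ((hdiff (-y)).hasDerivAt).comp y (hasDerivAt_neg y)
      rw [h1.deriv]; ring
    have hFproper : ∀ c : ℝ, IsCompact {z : ℝ | F z ≤ c} := by
      intro c
      have he : {z : ℝ | F z ≤ c} = -{z : ℝ | f z ≤ c} := by
        ext z; simp [hF, Set.mem_neg]
      rw [he]; exact (hproper c).neg
    have hvF : ∀ (c : ℝ) (u : ℝ), vfield F c (-u) = -(vfield f c u) := by
      intro c u
      simp only [vfield, hderivF, neg_neg]
      ring_nf
    have hXb : ∀ t, 0 ≤ t → HasDerivAt (fun s => -(xb s)) (vfield F cb (-(xb t))) t := by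
      intro t ht; rw [hvF]; exact (hxb t ht).neg
    have hXt : ∀ t, 0 ≤ t → HasDerivAt (fun s => -(xt s)) (vfield F ct (-(xt t))) t := by
      intro t ht; rw [hvF]; exact (hxt t ht).neg
    have hFx0 : 0 < deriv F (-x0) := by rw [hderivF, neg_neg]; linarith
    have hmain := main_pos hFcd hFproper hct hcbt hFx0
      (show (fun s => -(xb s)) 0 = -x0 by simp [hxb0])
      (show (fun s => -(xt s)) 0 = -x0 by simp [hxt0]) hXb hXt
    have hres : ∀ t, 0 < t → f (xb t) < f (xt t) := by
      intro t ht
      have := hmain t ht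
      simpa [hF] using this
    exact ⟨fun t ht => (hres t ht).le, fun _ t ht => hres t ht⟩
  · -- derivative zero: both solutions constant
    have hv0 : ∀ c : ℝ, vfield f c x0 = 0 := by
      intro c; simp [vfield, hzero]
    have hb := sol_eq_const hf (le_trans hct hcbt.le) hxb le_rfl (hv0 cb) hxb0
    have ht := sol_eq_const hf hct hxt le_rfl (hv0 ct) hxt0
    constructor
    · intro t htpos
      rw [hb t htpos.le, ht t htpos.le]
    · intro hne; exact absurd hzero hne
  · have hres := main_pos hf hproper hct hcbt hpos hxb0 hxt0 hxb hxt
    exact ⟨fun t ht => (hres t ht).le, fun _ t ht => hres t ht⟩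

lemma dsum {k : ℕ} (p q : Fin k → ℝ) :
    (∑ x : Fin k, ∑ y : Fin k, p y * p x * (q x * q y)) = (∑ x : Fin k, p x * q x)^2 := by
  rw [sq, Finset.sum_mul_sum]
  exact Finset.sum_congr rfl fun x _ => Finset.sum_congr rfl fun y _ => by ring

lemma imbal_eq {k : ℕ} (u v : EVec k) :
    imbal u v = (⟪u,u⟫ + ⟪v,v⟫)^2 - 4 * ⟪v,u⟫^2 := by
  have htr : (imbalMat u v).trace = ⟪u,u⟫ - ⟪v,v⟫ := by
    simp [imbalMat, Matrix.trace, Matrix.diag, PiLp.inner_apply, Finset.sum_sub_distrib]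
    rw [EuclideanSpace.norm_sq_eq, EuclideanSpace.norm_sq_eq]
    simp only [Real.norm_eq_abs, sq_abs, sq, abs_mul_abs_self]
  have htr2 : (imbalMat u v * imbalMat u v).trace = ⟪u,u⟫^2 + ⟪v,v⟫^2 - 2*⟪u,v⟫^2 := by
    simp only [imbalMat, Matrix.trace, Matrix.diag, Matrix.mul_apply, Matrix.of_apply,
      PiLp.inner_apply, RCLike.inner_apply, starRingEnd_apply, star_trivial]
    rw [Finset.sum_comm]
    simp only [sub_mul, mul_sub, Finset.sum_sub_distrib]
    rw [dsum u u, dsum v v]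
    have h2 : (∑ x : Fin k, ∑ y : Fin k, v y * v x * (u x * u y)) = (∑ x : Fin k, v x * u x)^2 := dsum v u
    have h3 : (∑ x : Fin k, ∑ y : Fin k, u y * u x * (v x * v y)) = (∑ x : Fin k, u x * v x)^2 := dsum u v
    rw [h2, h3]
    have hc : (∑ x : Fin k, v x * u x) = (∑ x : Fin k, u x * v x) :=
      Finset.sum_congr rfl fun x _ => mul_comm _ _
    rw [hc]; ring
  have hcomm : ⟪v,u⟫ = ⟪u,v⟫ := real_inner_comm u v
  rw [imbal, htr, htr2, hcomm]; ring

lemma imbal_nonneg {k : ℕ} (u v : EVec k) : 0 ≤ imbal u v := by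
  rw [imbal_eq]
  have h1 : 2 * |⟪v,u⟫| ≤ ⟪u,u⟫ + ⟪v,v⟫ := by
    have h := abs_real_inner_le_norm v u
    rw [real_inner_self_eq_norm_mul_norm, real_inner_self_eq_norm_mul_norm]
    nlinarith [norm_nonneg u, norm_nonneg v, sq_nonneg (‖u‖ - ‖v‖)]
  nlinarith [abs_nonneg ⟪v,u⟫, sq_abs ⟪v,u⟫]

lemma flow_scalar {k : ℕ} (f : ℝ → ℝ) (w1 w2 : ℝ → EVec k)
    (hflow : ∀ t : ℝ, 0 ≤ t → IsVecFlowAt f w1 w2 t) :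
    ∀ t, 0 ≤ t → HasDerivAt (fun s => ⟪w2 s, w1 s⟫)
      (vfield f (imbal (w1 0) (w2 0)) ⟪w2 t, w1 t⟫) t := by
  set x : ℝ → ℝ := fun s => ⟪w2 s, w1 s⟫ with hxdef
  set S : ℝ → ℝ := fun s => ⟪w1 s, w1 s⟫ + ⟪w2 s, w2 s⟫ with hSdef
  have hx : ∀ t, 0 ≤ t → HasDerivAt x (-(deriv f (x t)) * S t) t := by
    intro t ht
    have h := ((hflow t ht).2).inner ℝ ((hflow t ht).1)
    refine h.congr_deriv ?_
    simp only [real_inner_smul_right, real_inner_smul_left, hSdef]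
    ring
  have hS : ∀ t, 0 ≤ t → HasDerivAt S (-4 * deriv f (x t) * x t) t := by
    intro t ht
    have h1 := ((hflow t ht).1).inner ℝ ((hflow t ht).1)
    have h2 := ((hflow t ht).2).inner ℝ ((hflow t ht).2)
    have h := h1.add h2
    refine h.congr_deriv ?_
    simp only [real_inner_smul_right, real_inner_smul_left, hxdef,
      real_inner_comm (w1 t) (w2 t)]
    ring
  have hE : ∀ t, 0 ≤ t → HasDerivAt (fun s => S s^2 - 4 * x s^2) 0 t := by
    intro t ht
    have h := (((hS t ht).pow 2)).sub (((hx t ht).pow 2).const_mul 4)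
    refine h.congr_deriv ?_
    push_cast
    ring
  have hconst : ∀ t, 0 ≤ t → S t^2 - 4 * x t^2 = S 0^2 - 4 * x 0^2 := by
    intro t ht
    rcases eq_or_lt_of_le ht with h | h
    · rw [← h]
    · have hcont : ContinuousOn (fun s => S s^2 - 4 * x s^2) (Icc 0 t) := fun s hs =>
        ((hE s hs.1).continuousAt).continuousWithinAt
      have := constant_of_has_deriv_right_zero hcont
        (fun s hs => (hE s hs.1).hasDerivWithinAt) t ⟨ht, le_rfl⟩
      exact this
  have hSnonneg : ∀ t, 0 ≤ S t := by
    intro t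
    have h1 : (0:ℝ) ≤ ⟪w1 t, w1 t⟫ := real_inner_self_nonneg
    have h2 : (0:ℝ) ≤ ⟪w2 t, w2 t⟫ := real_inner_self_nonneg
    simp only [hSdef]; linarith
  have hc0 : imbal (w1 0) (w2 0) = S 0^2 - 4 * x 0^2 := by
    rw [imbal_eq]
  have hSeq : ∀ t, 0 ≤ t → S t = Real.sqrt (imbal (w1 0) (w2 0) + 4 * x t^2) := by
    intro t ht
    rw [hc0, show S 0^2 - 4*x 0^2 + 4*x t^2 = S t^2 by rw [← hconst t ht]; ring,
      Real.sqrt_sq (hSnonneg t)]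
  intro t ht
  have := hx t ht
  rw [hxdef] at this ⊢
  convert this using 1
  simp only [vfield]
  rw [← hSeq t ht]

end Stmt5Aux

open Stmt5Aux in
/-- (Imbalance-based acceleration.) -/
theorem stmt5 {k : ℕ} (hk : 1 ≤ k) (f : ℝ → ℝ) (fmin : ℝ)
    (hanalytic : ∀ x : ℝ, AnalyticAt ℝ f x)
    (hfmin_le : ∀ z : ℝ, fmin ≤ f z)
    (hfmin_attained : ∃ z : ℝ, f z = fmin)
    (hproper : ∀ c : ℝ, IsCompact {z : ℝ | f z ≤ c})
    (hf0 : fmin < f 0)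
    (bw10 bw20 tw10 tw20 : EVec k)
    (hsameprod : ⟪bw20, bw10⟫ = ⟪tw20, tw10⟫)
    (himbal : imbal tw10 tw20 < imbal bw10 bw20)
    (bw1 bw2 tw1 tw2 : ℝ → EVec k)
    (hbinit1 : bw1 0 = bw10) (hbinit2 : bw2 0 = bw20)
    (htinit1 : tw1 0 = tw10) (htinit2 : tw2 0 = tw20)
    (hbflow : ∀ t : ℝ, 0 ≤ t → IsVecFlowAt f bw1 bw2 t)
    (htflow : ∀ t : ℝ, 0 ≤ t → IsVecFlowAt f tw1 tw2 t) :
    (∀ t : ℝ, 0 < t → f ⟪bw2 t, bw1 t⟫ ≤ f ⟪tw2 t, tw1 t⟫) ∧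
      (deriv f ⟪bw20, bw10⟫ ≠ 0 →
        ∀ t : ℝ, 0 < t → f ⟪bw2 t, bw1 t⟫ < f ⟪tw2 t, tw1 t⟫) := by
  have hf2 : ContDiff ℝ 2 f := by
    rw [contDiff_iff_contDiffAt]; exact fun x => (hanalytic x).contDiffAt
  have hbx := flow_scalar f bw1 bw2 hbflow
  have htx := flow_scalar f tw1 tw2 htflow
  rw [hbinit1, hbinit2] at hbx
  rw [htinit1, htinit2] at htx
  have hxb0 : (fun s => ⟪bw2 s, bw1 s⟫) 0 = ⟪bw20, bw10⟫ := by
    simp [hbinit1, hbinit2]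
  have hxt0 : (fun s => ⟪tw2 s, tw1 s⟫) 0 = ⟪bw20, bw10⟫ := by
    simp [htinit1, htinit2, hsameprod]
  have hmain := scalar_main hf2 hproper (imbal_nonneg tw10 tw20) himbal hxb0 hxt0
    (fun t ht => hbx t ht) (fun t ht => htx t ht)
  exact ⟨fun t ht => hmain.1 t ht, fun hne t ht => hmain.2 hne t ht⟩
end
end

section
/- Consider the planar system of ODEs ẇ_1 = (w_2 √(1 + w_1²) − w_2² w_1) / (1 + w_1²)², ẇ_2 = (w_1 √(1 + w_1²) − w_2 w_1²) / (1 + w_1²). Along any differentiable solution t ↦ (w_1(t), w_2(t)) of this system, the quantity 𝒞(w_1, w_2) := w_2² − (1/2)(1 + w_1²)² is constant in t. -/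
/-- Along any differentiable solution of the planar system
`ẇ₁ = (w₂ √(1 + w₁²) − w₂² w₁)/(1 + w₁²)²`, `ẇ₂ = (w₁ √(1 + w₁²) − w₂ w₁²)/(1 + w₁²)`
(the gradient flow of `(1 − w₂ σ(w₁))²` with `σ(z) = z/√(1+z²)`), the quantity
`𝒞(w₁, w₂) = w₂² − (1/2)(1 + w₁²)²` is constant in `t`. -/
theorem stmt6 (w1 w2 : ℝ → ℝ)
    (hflow1 : ∀ t : ℝ,
      HasDerivAt w1
        ((w2 t * Real.sqrt (1 + w1 t ^ 2) - w2 t ^ 2 * w1 t) / (1 + w1 t ^ 2) ^ 2) t)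
    (hflow2 : ∀ t : ℝ,
      HasDerivAt w2
        ((w1 t * Real.sqrt (1 + w1 t ^ 2) - w2 t * w1 t ^ 2) / (1 + w1 t ^ 2)) t) :
    ∀ t : ℝ,
      w2 t ^ 2 - (1 / 2) * (1 + w1 t ^ 2) ^ 2 =
        w2 0 ^ 2 - (1 / 2) * (1 + w1 0 ^ 2) ^ 2 := by
  set f : ℝ → ℝ := fun t => w2 t ^ 2 - (1 / 2) * (1 + w1 t ^ 2) ^ 2 with hf
  have hd : ∀ t : ℝ, HasDerivAt f 0 t := by
    intro t
    have h1 := hflow1 t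
    have h2 := hflow2 t
    have hpos : (0:ℝ) < 1 + w1 t ^ 2 := by positivity
    have hne : (1 + w1 t ^ 2) ≠ 0 := ne_of_gt hpos
    have hD : HasDerivAt f
        (2 * w2 t * ((w1 t * Real.sqrt (1 + w1 t ^ 2) - w2 t * w1 t ^ 2) / (1 + w1 t ^ 2))
          - (1 / 2) * (2 * (1 + w1 t ^ 2) *
            (2 * w1 t * ((w2 t * Real.sqrt (1 + w1 t ^ 2) - w2 t ^ 2 * w1 t) / (1 + w1 t ^ 2) ^ 2)))) t := by
      have hA : HasDerivAt (fun t => w2 t ^ 2)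
          (2 * w2 t * ((w1 t * Real.sqrt (1 + w1 t ^ 2) - w2 t * w1 t ^ 2) / (1 + w1 t ^ 2))) t := by
        simpa [mul_comm, mul_assoc, mul_left_comm, Pi.pow_def] using h2.pow 2
      have hB : HasDerivAt (fun t => (1 + w1 t ^ 2) ^ 2)
          (2 * (1 + w1 t ^ 2) *
            (2 * w1 t * ((w2 t * Real.sqrt (1 + w1 t ^ 2) - w2 t ^ 2 * w1 t) / (1 + w1 t ^ 2) ^ 2))) t := by
        have hw : HasDerivAt (fun t => 1 + w1 t ^ 2)
            (2 * w1 t * ((w2 t * Real.sqrt (1 + w1 t ^ 2) - w2 t ^ 2 * w1 t) / (1 + w1 t ^ 2) ^ 2)) t := by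
          have := (h1.pow 2).const_add (1:ℝ)
          simpa [mul_comm, mul_assoc, mul_left_comm] using this
        simpa [mul_comm, mul_assoc, mul_left_comm, Pi.pow_def] using hw.pow 2
      simpa [hf, one_div, Pi.sub_def] using hA.sub (hB.const_mul (1/2 : ℝ))
    convert hD using 1
    field_simp
    ring
  intro t
  have := fun y : ℝ => (hd y).deriv
  have hconst : ∀ a b : ℝ, f a = f b := by
    intro a b
    have : Differentiable ℝ f := fun y => (hd y).differentiableAt
    have h0 : deriv f = fun _ => 0 := funext fun y => (hd y).deriv
    have := is_const_of_deriv_eq_zero this (fun y => (hd y).deriv) a b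
    exact this
  exact hconst t 0
end

section
/- Along any solution t ↦ W(t) = (W_1(t), …, W_N(t)) of the overparameterized gradient flow: (i) for all indices 1 ≤ i, j ≤ N, the difference of squared Frobenius norms ‖W_i(t)‖_F² − ‖W_j(t)‖_F² is constant in t (equal to a constant c_{ij} determined by the initialization); and (ii) for each i there exist constants a_i ≥ 0 and b_i ≥ 0, depending only on the initialization, such that ‖W_i(t)‖_F ≤ a_i σ_max(W_N(t)) + b_i for all t, where σ_max denotes the largest singular value (operator 2-norm). -/
open Matrix

noncomputable section

/-- Largest singular value (operator 2-norm) of a matrix. -/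
def sigmaMax {a b : ℕ} (A : Mat a b) : ℝ :=
  ‖LinearMap.toContinuousLinearMap (Matrix.toEuclideanLin A)‖

/-! ### Auxiliary lemmas -/

lemma mcast_refl {a c : ℕ} (h : a = a) (A : Mat a c) : mcast h A = A := rfl

lemma mcast_mcast {a b c e : ℕ} (h1 : a = b) (h2 : b = c) (A : Mat a e) :
    mcast h2 (mcast h1 A) = mcast (h1.trans h2) A := rfl

lemma mcast_mul {a b c e : ℕ} (h : a = b) (A : Mat a c) (B : Mat c e) :
    mcast h (A * B) = mcast h A * B := by
  subst h; rfl

lemma W_mul_mcast {d : ℕ → ℕ} (W : (i : ℕ) → Mat (d (i + 1)) (d i)) {q r c : ℕ}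
    (e : q = r) (h1 : d q = d r) (h2 : d (q + 1) = d (r + 1)) (Y : Mat (d q) c) :
    W r * mcast h1 Y = mcast h2 (W q * Y) := by
  subst e; rfl

lemma layerProd_zero_split {d : ℕ → ℕ} (W : (i : ℕ) → Mat (d (i + 1)) (d i)) (b p : ℕ) :
    layerProd W 0 (b + p) =
      mcast (congrArg d (Nat.zero_add (b + p)).symm)
        (layerProd W b p * mcast (congrArg d (Nat.zero_add b)) (layerProd W 0 b)) := by
  induction p with
  | zero =>
      show layerProd W 0 b =
        mcast _ ((1 : Mat (d b) (d b)) * mcast (congrArg d (Nat.zero_add b)) (layerProd W 0 b))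
      rw [Matrix.one_mul, mcast_mcast, mcast_refl]
  | succ p ih =>
      show W (0 + (b + p)) * layerProd W 0 (b + p) = _
      rw [ih, W_mul_mcast W (Nat.zero_add (b + p)).symm _
        (congrArg d (congrArg Nat.succ (Nat.zero_add (b + p)).symm)), ← Matrix.mul_assoc]
      rfl

lemma full_split {d : ℕ → ℕ} (W : (i : ℕ) → Mat (d (i + 1)) (d i)) {i m N : ℕ}
    (eN : N = i + 1 + m) (hA : d (i + 1 + m) = d N) (hB : d (0 + i) = d i) :
    mcast hA (layerProd W (i + 1) m) * W i * mcast hB (layerProd W 0 i) = fullProd N W := by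
  subst eN
  rw [mcast_refl]
  show _ = mcast (congrArg d (Nat.zero_add (i + 1 + m))) (layerProd W 0 (i + 1 + m))
  rw [layerProd_zero_split W (i + 1) m, mcast_mcast, mcast_refl]
  show _ = layerProd W (i + 1) m *
      mcast (congrArg d (Nat.zero_add (i + 1))) (W (0 + i) * layerProd W 0 i)
  rw [← W_mul_mcast W (Nat.zero_add i) hB (congrArg d (Nat.zero_add (i + 1))), Matrix.mul_assoc]

lemma frobInner_eq_trace {a b : ℕ} (X Y : Mat a b) : frobInner X Y = (Xᵀ * Y).trace := by
  simp only [frobInner, Matrix.trace, Matrix.diag_apply, Matrix.mul_apply,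
    Matrix.transpose_apply]
  exact Finset.sum_comm

lemma frobInner_conj {p q r s : ℕ} (X : Mat p q) (A : Mat r p) (B : Mat q s) (G : Mat r s) :
    frobInner X (Aᵀ * G * Bᵀ) = frobInner (A * X * B) G := by
  rw [frobInner_eq_trace, frobInner_eq_trace, Matrix.transpose_mul, Matrix.transpose_mul,
    Matrix.mul_assoc (Bᵀ) _ G, Matrix.trace_mul_comm (Bᵀ)]
  simp only [Matrix.mul_assoc]

lemma frob_grad_eq {d : ℕ → ℕ} (N : ℕ) (gradf : Mat (d N) (d 0) → Mat (d N) (d 0))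
    (W : (i : ℕ) → Mat (d (i + 1)) (d i)) (i : ℕ) (hi : i < N) :
    frobInner (W i) (gradTerm N gradf W i hi) =
      frobInner (fullProd N W) (gradf (fullProd N W)) := by
  unfold gradTerm
  rw [frobInner_conj, full_split W (by omega : N = i + 1 + (N - (i + 1)))]

lemma frobInner_self_nonneg {a b : ℕ} (A : Mat a b) : 0 ≤ frobInner A A :=
  Finset.sum_nonneg fun _ _ => Finset.sum_nonneg fun _ _ => mul_self_nonneg _

lemma frobNorm_sq {a b : ℕ} (A : Mat a b) : frobNorm A ^ 2 = frobInner A A :=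
  Real.sq_sqrt (frobInner_self_nonneg A)

lemma hasDerivAt_frobSq {d : ℕ → ℕ} {N : ℕ} {gradf : Mat (d N) (d 0) → Mat (d N) (d 0)}
    {W : ℝ → (i : ℕ) → Mat (d (i + 1)) (d i)}
    (hflow : ∀ t : ℝ, IsOvpFlowAt N gradf W t) (i : Fin N) (t : ℝ) :
    HasDerivAt (fun s => frobInner (W s i.val) (W s i.val))
      (-2 * frobInner (fullProd N (W t)) (gradf (fullProd N (W t)))) t := by
  have h := hflow t i
  have h1 : HasDerivAt (fun s => frobInner (W s i.val) (W s i.val))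
      (∑ a, ∑ b, (-(gradTerm N gradf (W t) i.val i.isLt) a b * W t i.val a b
        + W t i.val a b * -(gradTerm N gradf (W t) i.val i.isLt) a b)) t := by
    unfold frobInner
    apply HasDerivAt.fun_sum; intro a _
    apply HasDerivAt.fun_sum; intro b _
    exact (h a b).mul (h a b)
  convert h1 using 1
  rw [← frob_grad_eq N gradf (W t) i.val i.isLt]
  unfold frobInner
  rw [Finset.mul_sum]
  refine Finset.sum_congr rfl fun a _ => ?_
  rw [Finset.mul_sum]
  exact Finset.sum_congr rfl fun b _ => by ring

lemma frobSq_diff_const {d : ℕ → ℕ} {N : ℕ} {gradf : Mat (d N) (d 0) → Mat (d N) (d 0)}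
    {W : ℝ → (i : ℕ) → Mat (d (i + 1)) (d i)}
    (hflow : ∀ t : ℝ, IsOvpFlowAt N gradf W t) (i j : Fin N) (t : ℝ) :
    frobInner (W t i.val) (W t i.val) - frobInner (W t j.val) (W t j.val) =
      frobInner (W 0 i.val) (W 0 i.val) - frobInner (W 0 j.val) (W 0 j.val) := by
  have key : ∀ s : ℝ, HasDerivAt
      (fun u => frobInner (W u i.val) (W u i.val) - frobInner (W u j.val) (W u j.val)) 0 s := by
    intro s
    have := (hasDerivAt_frobSq hflow i s).sub (hasDerivAt_frobSq hflow j s)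
    rw [sub_self] at this; exact this
  exact is_const_of_deriv_eq_zero (fun s => (key s).differentiableAt)
    (fun s => (key s).deriv) t 0

lemma sqrt_add_le' (x y : ℝ) (hx : 0 ≤ x) (hy : 0 ≤ y) :
    Real.sqrt (x + y) ≤ Real.sqrt x + Real.sqrt y := by
  have h1 : x + y ≤ (Real.sqrt x + Real.sqrt y) ^ 2 := by
    have e1 := Real.sq_sqrt hx
    have e2 := Real.sq_sqrt hy
    nlinarith [Real.sqrt_nonneg x, Real.sqrt_nonneg y]
  calc Real.sqrt (x + y) ≤ Real.sqrt ((Real.sqrt x + Real.sqrt y) ^ 2) :=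
        Real.sqrt_le_sqrt h1
    _ = Real.sqrt x + Real.sqrt y := Real.sqrt_sq (by positivity)

lemma frobNorm_le_sigmaMax {a b : ℕ} (A : Mat a b) :
    frobNorm A ≤ Real.sqrt b * sigmaMax A := by
  set T := LinearMap.toContinuousLinearMap (Matrix.toEuclideanLin A) with hT
  have hσ : 0 ≤ sigmaMax A := norm_nonneg T
  have hcol : ∀ j : Fin b, ∑ i, A i j * A i j ≤ sigmaMax A ^ 2 := by
    intro j
    have hv : ‖T (EuclideanSpace.single j (1 : ℝ))‖ ≤ sigmaMax A := by
      calc ‖T (EuclideanSpace.single j (1 : ℝ))‖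
          ≤ ‖T‖ * ‖EuclideanSpace.single j (1 : ℝ)‖ := T.le_opNorm _
        _ = sigmaMax A := by rw [EuclideanSpace.norm_single]; simp [sigmaMax]; rfl
    have hnorm : ‖T (EuclideanSpace.single j (1 : ℝ))‖ ^ 2 = ∑ i, A i j * A i j := by
      rw [EuclideanSpace.norm_eq, Real.sq_sqrt (Finset.sum_nonneg fun _ _ => sq_nonneg _)]
      refine Finset.sum_congr rfl fun i _ => ?_
      have : (T (EuclideanSpace.single j (1 : ℝ))) i = A i j := by
        show (A *ᵥ Pi.single j (1 : ℝ)) i = A i j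
        simp [Matrix.mulVec_single]
      rw [this]
      simp [sq, Real.norm_eq_abs, abs_mul_abs_self]
    rw [← hnorm]
    exact pow_le_pow_left₀ (norm_nonneg _) hv 2
  have hsum : frobInner A A ≤ (b : ℝ) * sigmaMax A ^ 2 := by
    have : frobInner A A = ∑ j, ∑ i, A i j * A i j := by
      unfold frobInner; exact Finset.sum_comm
    rw [this]
    calc ∑ j : Fin b, ∑ i, A i j * A i j ≤ ∑ j : Fin b, sigmaMax A ^ 2 :=
          Finset.sum_le_sum fun j _ => hcol j
      _ = (b : ℝ) * sigmaMax A ^ 2 := by simp [mul_comm]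
  calc frobNorm A = Real.sqrt (frobInner A A) := rfl
    _ ≤ Real.sqrt ((b : ℝ) * sigmaMax A ^ 2) := Real.sqrt_le_sqrt hsum
    _ = Real.sqrt b * sigmaMax A := by
        rw [Real.sqrt_mul (Nat.cast_nonneg b), Real.sqrt_sq hσ]

lemma frobNorm_nonneg {a b : ℕ} (A : Mat a b) : 0 ≤ frobNorm A := Real.sqrt_nonneg _

/-- Along any solution of the overparameterized gradient flow:
(i) for all layers `i, j`, the difference `‖W_i(t)‖_F² − ‖W_j(t)‖_F²` is constant in `t`
(equal to its value at the initialization); and (ii) for each layer `i` there are constants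
`a_i, b_i ≥ 0`, depending only on the initialization, with
`‖W_i(t)‖_F ≤ a_i σ_max(W_N(t)) + b_i` for all `t` (here `W_N` is the last layer, 0-indexed
`N-1`). -/
theorem stmt8 {n k N : ℕ} (hn : 1 ≤ n) (hk : n < k) (hN : 2 ≤ N)
    (d : ℕ → ℕ) (hd0 : d 0 = n) (hdN : d N = n) (hdmid : ∀ i, 0 < i → i < N → d i = k)
    (f : Mat (d N) (d 0) → ℝ) (gradf : Mat (d N) (d 0) → Mat (d N) (d 0))
    (hgradf : IsGradientOf f gradf)
    (W : ℝ → (i : ℕ) → Mat (d (i + 1)) (d i))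
    (hflow : ∀ t : ℝ, IsOvpFlowAt N gradf W t) :
    (∀ i j : Fin N, ∀ t : ℝ,
        frobNorm (W t i.val) ^ 2 - frobNorm (W t j.val) ^ 2 =
          frobNorm (W 0 i.val) ^ 2 - frobNorm (W 0 j.val) ^ 2) ∧
      ∀ i : Fin N, ∃ a b : ℝ, 0 ≤ a ∧ 0 ≤ b ∧
        ∀ t : ℝ, frobNorm (W t i.val) ≤ a * sigmaMax (W t (N - 1)) + b := by
  constructor
  · intro i j t
    rw [frobNorm_sq, frobNorm_sq, frobNorm_sq, frobNorm_sq]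
    exact frobSq_diff_const hflow i j t
  · intro i
    have hL : N - 1 < N := by omega
    set c := frobInner (W 0 i.val) (W 0 i.val) - frobInner (W 0 (N - 1)) (W 0 (N - 1)) with hc
    refine ⟨Real.sqrt (d (N - 1)), Real.sqrt (max c 0), Real.sqrt_nonneg _,
      Real.sqrt_nonneg _, ?_⟩
    intro t
    have hdiff : frobInner (W t i.val) (W t i.val) - frobInner (W t (N - 1)) (W t (N - 1)) =
        frobInner (W 0 i.val) (W 0 i.val) - frobInner (W 0 (N - 1)) (W 0 (N - 1)) :=
      frobSq_diff_const hflow i ⟨N - 1, hL⟩ t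
    have h1 : frobInner (W t i.val) (W t i.val) ≤
        frobInner (W t (N - 1)) (W t (N - 1)) + max c 0 := by
      have hm : c ≤ max c 0 := le_max_left _ _
      rw [hc] at hm
      linarith
    calc frobNorm (W t i.val) = Real.sqrt (frobInner (W t i.val) (W t i.val)) := rfl
      _ ≤ Real.sqrt (frobInner (W t (N - 1)) (W t (N - 1)) + max c 0) :=
          Real.sqrt_le_sqrt h1
      _ ≤ Real.sqrt (frobInner (W t (N - 1)) (W t (N - 1))) + Real.sqrt (max c 0) :=
          sqrt_add_le' _ _ (frobInner_self_nonneg _) (le_max_right _ _)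
      _ = frobNorm (W t (N - 1)) + Real.sqrt (max c 0) := rfl
      _ ≤ Real.sqrt (d (N - 1)) * sigmaMax (W t (N - 1)) + Real.sqrt (max c 0) := by
          have := frobNorm_le_sigmaMax (W t (N - 1))
          linarith
end
end

section
/- Along any solution t ↦ (w_1(t), w_2(t)) of the vector overparameterized gradient flow, the quantity D(t) := (‖w_1(t)‖² + ‖w_2(t)‖²)² − 4 ⟨w_2(t), w_1(t)⟩² is constant in t, and D(t) ≥ 0 for all t. -/
open scoped RealInnerProductSpace

noncomputable section

lemma stmt13_aux {k : ℕ} (f : ℝ → ℝ) (w1 w2 : ℝ → EVec k)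
    (hflow : ∀ t : ℝ, IsVecFlowAt f w1 w2 t) (t : ℝ) :
    HasDerivAt (fun s => (⟪w1 s, w1 s⟫ + ⟪w2 s, w2 s⟫) ^ 2 - 4 * ⟪w2 s, w1 s⟫ ^ 2) 0 t := by
  obtain ⟨hw1, hw2⟩ := hflow t
  set c : ℝ := -(deriv f ⟪w2 t, w1 t⟫) with hc
  have h11 := hw1.inner ℝ hw1
  have h22 := hw2.inner ℝ hw2
  have h21 := hw2.inner ℝ hw1
  have hS := ((h11.add h22).pow 2)
  have hP := (h21.pow 2)
  have := hS.sub (hP.const_mul 4)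
  convert this using 1
  · rfl
  · rfl
  · funext s; simp
  simp only [real_inner_smul_left, real_inner_smul_right, Pi.add_apply]
  rw [real_inner_comm (w2 t) (w1 t)]
  ring

/-- Along any solution of the vector overparameterized gradient flow, the
quantity `D(t) = (‖w₁(t)‖² + ‖w₂(t)‖²)² − 4 ⟪w₂(t), w₁(t)⟫²` is constant in `t` and
nonnegative. -/
theorem stmt13 {k : ℕ} (hk : 1 ≤ k) (f : ℝ → ℝ)
    (w1 w2 : ℝ → EVec k)
    (hflow : ∀ t : ℝ, IsVecFlowAt f w1 w2 t) :
    ∀ t : ℝ,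
      (‖w1 t‖ ^ 2 + ‖w2 t‖ ^ 2) ^ 2 - 4 * ⟪w2 t, w1 t⟫ ^ 2 =
        (‖w1 0‖ ^ 2 + ‖w2 0‖ ^ 2) ^ 2 - 4 * ⟪w2 0, w1 0⟫ ^ 2 ∧
      0 ≤ (‖w1 t‖ ^ 2 + ‖w2 t‖ ^ 2) ^ 2 - 4 * ⟪w2 t, w1 t⟫ ^ 2 := by
  intro t
  constructor
  · have hconst : ∀ s : ℝ,
        (⟪w1 s, w1 s⟫ + ⟪w2 s, w2 s⟫) ^ 2 - 4 * ⟪w2 s, w1 s⟫ ^ 2 =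
        (⟪w1 0, w1 0⟫ + ⟪w2 0, w2 0⟫) ^ 2 - 4 * ⟪w2 0, w1 0⟫ ^ 2 := by
      intro s
      exact is_const_of_deriv_eq_zero (f := fun s => (⟪w1 s, w1 s⟫ + ⟪w2 s, w2 s⟫) ^ 2 - 4 * ⟪w2 s, w1 s⟫ ^ 2) (fun x => (stmt13_aux f w1 w2 hflow x).differentiableAt) (fun x => (stmt13_aux f w1 w2 hflow x).deriv) s 0
    have h := hconst t
    simpa only [real_inner_self_eq_norm_sq] using h
  · have h := abs_real_inner_le_norm (w2 t) (w1 t)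
    have h2 : ⟪w2 t, w1 t⟫ ^ 2 ≤ (‖w2 t‖ * ‖w1 t‖) ^ 2 := by
      rw [← sq_abs]
      exact pow_le_pow_left₀ (abs_nonneg _) h 2
    nlinarith [sq_nonneg (‖w1 t‖ ^ 2 - ‖w2 t‖ ^ 2)]
end
end

section
/- Suppose f : ℝ → ℝ is real analytic (so that solutions of the flow are unique). Let t ↦ (w_1(t), w_2(t)) be a solution of the vector overparameterized gradient flow on [0, T). If f'(⟨w_2(0), w_1(0)⟩) > 0, then f'(⟨w_2(t), w_1(t)⟩) > 0 for all t ∈ [0, T); likewise, if f'(⟨w_2(0), w_1(0)⟩) < 0, then f'(⟨w_2(t), w_1(t)⟩) < 0 for all t ∈ [0, T). -/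
open scoped RealInnerProductSpace

noncomputable section

/-- For real analytic `f`, along any solution of the vector
overparameterized gradient flow on `[0, T)`, the sign of `f'(⟪w₂, w₁⟫)` is preserved:
if it is positive (resp. negative) at `t = 0`, it stays positive (resp. negative) on `[0, T)`. -/
theorem stmt15 {k : ℕ} (hk : 1 ≤ k) (f : ℝ → ℝ)
    (hanalytic : ∀ x : ℝ, AnalyticAt ℝ f x)
    (T : EReal) (hT : 0 < T)
    (w1 w2 : ℝ → EVec k)
    (hflow : ∀ t : ℝ, 0 ≤ t → (t : EReal) < T → IsVecFlowAt f w1 w2 t) :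
    (0 < deriv f ⟪w2 0, w1 0⟫ →
        ∀ t : ℝ, 0 ≤ t → (t : EReal) < T → 0 < deriv f ⟪w2 t, w1 t⟫) ∧
      (deriv f ⟪w2 0, w1 0⟫ < 0 →
        ∀ t : ℝ, 0 ≤ t → (t : EReal) < T → deriv f ⟪w2 t, w1 t⟫ < 0) := by
  -- notation
  set g : ℝ → ℝ := fun t => ⟪w2 t, w1 t⟫ with hg
  set h : ℝ → ℝ := fun t => deriv f (g t) with hh
  -- analyticity of derivatives of f
  have hfa : AnalyticOnNhd ℝ f Set.univ := fun x _ => hanalytic x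
  have hf1 : AnalyticOnNhd ℝ (deriv f) Set.univ := hfa.deriv
  have hf2 : AnalyticOnNhd ℝ (deriv (deriv f)) Set.univ := hf1.deriv
  -- the coefficient of the linear ODE satisfied by h
  set a : ℝ → ℝ := fun t =>
    -(deriv (deriv f) (g t) * (‖w1 t‖ ^ 2 + ‖w2 t‖ ^ 2)) with ha
  -- derivative of h on [0, T)
  have hderiv : ∀ t : ℝ, 0 ≤ t → (t : EReal) < T → HasDerivAt h (a t * h t) t := by
    intro t ht0 htT
    obtain ⟨hw1, hw2⟩ := hflow t ht0 htT
    have hgd : HasDerivAt g (-(h t) * (‖w1 t‖ ^ 2 + ‖w2 t‖ ^ 2)) t := by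
      have := (hw2.inner ℝ hw1 : HasDerivAt (fun s => ⟪w2 s, w1 s⟫)
        (⟪w2 t, -(deriv f ⟪w2 t, w1 t⟫) • w2 t⟫ + ⟪-(deriv f ⟪w2 t, w1 t⟫) • w1 t, w1 t⟫) t)
      refine this.congr_deriv ?_
      rw [real_inner_smul_right, real_inner_smul_left,
        real_inner_self_eq_norm_sq, real_inner_self_eq_norm_sq]
      simp only [hh, hg]
      ring
    have hfd : HasDerivAt (deriv f) (deriv (deriv f) (g t)) (g t) :=
      ((hf1 (g t) trivial).differentiableAt).hasDerivAt
    have := hfd.comp t hgd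
    refine this.congr_deriv ?_
    simp only [hh, ha]
    ring
  -- h is continuous at each point of [0, T)
  have hcont : ∀ t : ℝ, 0 ≤ t → (t : EReal) < T → ContinuousAt h t := by
    intro t ht0 htT
    exact (hderiv t ht0 htT).continuousAt
  -- key: if h vanishes somewhere on [0, T), then h 0 = 0
  have key : ∀ s : ℝ, 0 ≤ s → (s : EReal) < T → h s = 0 → h 0 = 0 := by
    intro s hs0 hsT hzero
    have memT : ∀ r : ℝ, 0 ≤ r → r ≤ s → (r : EReal) < T := fun r _ hr =>
      lt_of_le_of_lt (EReal.coe_le_coe_iff.mpr hr) hsT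
    -- reversed time function
    set H : ℝ → ℝ := fun u => h (s - u) with hH
    -- bound on the coefficient a over [0, s]
    have hacont : ContinuousOn a (Set.Icc 0 s) := by
      intro r hr
      have hr' := memT r hr.1 hr.2
      obtain ⟨hw1, hw2⟩ := hflow r hr.1 hr'
      have hgc : ContinuousAt g r := ((hw2.inner ℝ hw1).continuousAt)
      have : ContinuousAt a r := by
        apply ContinuousAt.neg
        apply ContinuousAt.mul
        · exact ((hf2 (g r) trivial).continuousAt).comp hgc
        · exact ((hw1.continuousAt.norm.pow 2).add (hw2.continuousAt.norm.pow 2))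
      exact this.continuousWithinAt
    obtain ⟨C, hC⟩ := (isCompact_Icc).exists_bound_of_continuousOn hacont
    -- Grönwall on H : H(0) = h(s) = 0 forces H ≡ 0 on [0, s]
    have hHcont : ContinuousOn H (Set.Icc 0 s) := by
      intro u hu
      have h1 : (0 : ℝ) ≤ s - u := by linarith [hu.2]
      have h2 : s - u ≤ s := by linarith [hu.1]
      have : ContinuousAt H u :=
        (hcont (s - u) h1 (memT _ h1 h2)).comp ((continuous_const.sub continuous_id).continuousAt)
      exact this.continuousWithinAt
    have hHd : ∀ u ∈ Set.Ico 0 s, HasDerivWithinAt H ((a (s - u) * h (s - u)) * (-1)) (Set.Ici u) u := by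
      intro u hu
      have h1 : (0 : ℝ) ≤ s - u := by linarith [hu.2.le]
      have h2 : s - u ≤ s := by linarith [hu.1]
      have hsub : HasDerivAt (fun u : ℝ => s - u) (-1) u := by
        simpa using (hasDerivAt_id u).const_sub s
      exact ((hderiv (s - u) h1 (memT _ h1 h2)).comp u hsub).hasDerivWithinAt
    have hbound : ∀ u ∈ Set.Ico 0 s, ‖(a (s - u) * h (s - u)) * (-1)‖ ≤ C * ‖H u‖ + 0 := by
      intro u hu
      have h1 : (0 : ℝ) ≤ s - u := by linarith [hu.2.le]
      have h2 : s - u ≤ s := by linarith [hu.1]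
      have hCu : ‖a (s - u)‖ ≤ C := hC _ ⟨h1, h2⟩
      have : ‖(a (s - u) * h (s - u)) * (-1)‖ = ‖a (s - u)‖ * ‖h (s - u)‖ := by
        rw [norm_mul, norm_mul]; simp
      rw [this, add_zero]
      have hH0 : ‖H u‖ = ‖h (s - u)‖ := rfl
      rw [hH0]
      exact mul_le_mul_of_nonneg_right hCu (norm_nonneg _)
    have hH0 : ‖H 0‖ ≤ 0 := by
      simp only [hH, sub_zero, hzero, norm_zero, le_refl]
    have := norm_le_gronwallBound_of_norm_deriv_right_le hHcont hHd hH0 hbound s ⟨hs0, le_rfl⟩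
    rw [gronwallBound_ε0, zero_mul] at this
    have : ‖H s‖ ≤ 0 := this
    have hHs : H s = h 0 := by simp [hH]
    rw [hHs] at this
    exact norm_le_zero_iff.mp this
  constructor
  · intro hpos t ht0 htT
    by_contra hc
    push_neg at hc
    -- h is continuous on [0, t]
    have hcIcc : ContinuousOn h (Set.Icc 0 t) := fun r hr =>
      (hcont r hr.1 (lt_of_le_of_lt (EReal.coe_le_coe_iff.mpr hr.2) htT)).continuousWithinAt
    have : (0 : ℝ) ∈ Set.Icc (h t) (h 0) := ⟨hc, le_of_lt hpos⟩
    obtain ⟨s, hs, hval⟩ := intermediate_value_Icc' ht0 hcIcc this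
    have hsT : (s : EReal) < T := lt_of_le_of_lt (EReal.coe_le_coe_iff.mpr hs.2) htT
    have := key s hs.1 hsT hval
    exact absurd this (ne_of_gt hpos)
  · intro hneg t ht0 htT
    by_contra hc
    push_neg at hc
    have hcIcc : ContinuousOn h (Set.Icc 0 t) := fun r hr =>
      (hcont r hr.1 (lt_of_le_of_lt (EReal.coe_le_coe_iff.mpr hr.2) htT)).continuousWithinAt
    have : (0 : ℝ) ∈ Set.Icc (h 0) (h t) := ⟨le_of_lt hneg, hc⟩
    obtain ⟨s, hs, hval⟩ := intermediate_value_Icc ht0 hcIcc this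
    have hsT : (s : EReal) < T := lt_of_le_of_lt (EReal.coe_le_coe_iff.mpr hs.2) htT
    have := key s hs.1 hsT hval
    exact absurd this (ne_of_lt hneg)
end
end

section
/- Let s ∈ {−1, +1} and let t ↦ (w_1(t), w_2(t)) be a solution of the vector overparameterized gradient flow on [0, T) with f real analytic. If w_1(0) = s·w_2(0), then w_1(t) = s·w_2(t) for all t ∈ [0, T); that is, the set {(w_1, w_2) : w_1 = s w_2} is forward invariant under the flow. -/
open scoped RealInnerProductSpace

noncomputable section

/-- For `s ∈ {−1, +1}` and real analytic `f`, the set `{w₁ = s w₂}` is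
forward invariant under the vector overparameterized gradient flow: if `w₁(0) = s w₂(0)`,
then `w₁(t) = s w₂(t)` for all `t ∈ [0, T)`. -/
theorem stmt16 {k : ℕ} (hk : 1 ≤ k) (f : ℝ → ℝ)
    (hanalytic : ∀ x : ℝ, AnalyticAt ℝ f x)
    (s : ℝ) (hs : s = 1 ∨ s = -1)
    (T : EReal) (hT : 0 < T)
    (w1 w2 : ℝ → EVec k)
    (hflow : ∀ t : ℝ, 0 ≤ t → (t : EReal) < T → IsVecFlowAt f w1 w2 t)
    (hinit : w1 0 = s • w2 0) :
    ∀ t : ℝ, 0 ≤ t → (t : EReal) < T → w1 t = s • w2 t := by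
  have hs2 : s * s = 1 := by rcases hs with h | h <;> simp [h]
  -- continuity of deriv f
  have hdf : Continuous (deriv f) := by
    have hA : AnalyticOnNhd ℝ f Set.univ := fun x _ => hanalytic x
    exact continuous_iff_continuousAt.mpr fun x =>
      (hA.deriv x (Set.mem_univ x)).continuousAt
  intro t ht htT
  set u : ℝ → EVec k := fun τ => w1 τ - s • w2 τ with hu
  -- for each τ ∈ [0, t], we are in the flow regime
  have hmem : ∀ τ ∈ Set.Icc 0 t, 0 ≤ τ ∧ (τ : EReal) < T := by
    intro τ hτ
    exact ⟨hτ.1, lt_of_le_of_lt (by exact_mod_cast hτ.2) htT⟩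
  -- g is the coefficient
  set g : ℝ → ℝ := fun τ => s * deriv f ⟪w2 τ, w1 τ⟫ with hg
  have hderiv : ∀ τ ∈ Set.Icc 0 t, HasDerivAt u (g τ • u τ) τ := by
    intro τ hτ
    obtain ⟨hτ0, hτT⟩ := hmem τ hτ
    obtain ⟨h1, h2⟩ := hflow τ hτ0 hτT
    have hD := h1.sub ((h2.const_smul s))
    have hc : g τ • u τ =
        -deriv f ⟪w2 τ, w1 τ⟫ • w2 τ - s • (-deriv f ⟪w2 τ, w1 τ⟫ • w1 τ) := by
      simp only [hg, hu, smul_sub, smul_smul, neg_smul, smul_neg, sub_neg_eq_add]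
      rw [show s * deriv f ⟪w2 τ, w1 τ⟫ * s = (s * s) * deriv f ⟪w2 τ, w1 τ⟫ by ring, hs2,
        one_mul]
      abel
    rw [hc]
    exact hD
  have hcont : ContinuousOn u (Set.Icc 0 t) := fun τ hτ =>
    ((hderiv τ hτ).continuousAt).continuousWithinAt
  -- bound on g
  have hgcont : ContinuousOn g (Set.Icc 0 t) := by
    have hw1 : ContinuousOn w1 (Set.Icc 0 t) := fun τ hτ =>
      ((hflow τ (hmem τ hτ).1 (hmem τ hτ).2).1.continuousAt).continuousWithinAt
    have hw2 : ContinuousOn w2 (Set.Icc 0 t) := fun τ hτ =>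
      ((hflow τ (hmem τ hτ).1 (hmem τ hτ).2).2.continuousAt).continuousWithinAt
    exact continuousOn_const.mul (hdf.comp_continuousOn (hw2.inner hw1))
  obtain ⟨K, hK⟩ := (isCompact_Icc).exists_bound_of_continuousOn hgcont
  have hbound : ∀ τ ∈ Set.Ico 0 t, ‖g τ • u τ‖ ≤ K * ‖u τ‖ + 0 := by
    intro τ hτ
    have hτ' : τ ∈ Set.Icc 0 t := Set.mem_Icc_of_Ico hτ
    rw [norm_smul, add_zero]
    exact mul_le_mul_of_nonneg_right (hK τ hτ') (norm_nonneg _)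
  have h0 : ‖u 0‖ ≤ 0 := by simp [hu, hinit]
  have := norm_le_gronwallBound_of_norm_deriv_right_le hcont
    (fun τ hτ => ((hderiv τ (Set.mem_Icc_of_Ico hτ)).hasDerivWithinAt)) h0 hbound
    t (Set.mem_Icc.mpr ⟨ht, le_refl t⟩)
  rw [gronwallBound_ε0] at this
  simp only [zero_mul] at this
  have hun : u t = 0 := norm_le_zero_iff.mp this
  have h' : w1 t - s • w2 t = 0 := hun
  exact sub_eq_zero.mp h'
end
end

section
/- Suppose f : ℝ → ℝ is continuously differentiable, bounded below with attained minimum value f_min, satisfies f(0) > f_min and f'(0) ≠ 0, and there exists a positive-definite function α : [0,∞) → [0,∞) (α(0) = 0 and α(x) > 0 for x > 0) such that |f'(z)| ≥ α(f(z) − f_min) for all z ∈ ℝ. Let s := sign(f'(0)). Then f'(z) ≠ 0 for every z ∈ ℝ with s·z > 0. -/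
/-- Auxiliary lemma: the one-sided (positive side) statement. -/
lemma stmt17_aux (f : ℝ → ℝ) (fmin : ℝ)
    (hcont : Continuous (deriv f))
    (hf0 : fmin < f 0)
    (hdiff : ∀ x y : ℝ, x ≤ y → DifferentiableOn ℝ f (Set.Icc x y))
    (hf'0 : 0 < deriv f 0)
    (hzero : ∀ z : ℝ, deriv f z = 0 → f z = fmin) :
    ∀ z : ℝ, 0 < z → deriv f z ≠ 0 := by
  intro z hz hdz
  set S : Set ℝ := {t | t ∈ Set.Icc (0:ℝ) z ∧ deriv f t = 0} with hS
  have hSclosed : IsClosed S := by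
    have : S = Set.Icc (0:ℝ) z ∩ deriv f ⁻¹' {0} := by
      ext t; simp [hS, Set.mem_inter_iff]
    rw [this]
    exact isClosed_Icc.inter (isClosed_singleton.preimage hcont)
  have hSne : S.Nonempty := ⟨z, ⟨le_of_lt hz, le_rfl⟩, hdz⟩
  have hSbdd : BddBelow S := ⟨0, fun t ht => ht.1.1⟩
  set w := sInf S with hw
  have hwS : w ∈ S := hSclosed.csInf_mem hSne hSbdd
  have hw0 : 0 < w := by
    rcases lt_or_eq_of_le hwS.1.1 with h | h
    · exact h
    · exact absurd hwS.2 (by rw [← h]; exact ne_of_gt hf'0)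
  have hposlt : ∀ t, 0 ≤ t → t < w → 0 < deriv f t := by
    intro t ht0 htw
    by_contra hle
    push_neg at hle
    -- IVT: deriv f 0 > 0 ≥ deriv f t, so some u ∈ [0,t] has deriv f u = 0
    have : (0:ℝ) ∈ Set.Icc (deriv f t) (deriv f 0) := ⟨hle, le_of_lt hf'0⟩
    have hIVT := intermediate_value_Icc' ht0 (hcont.continuousOn) this
    obtain ⟨u, hu, hu0⟩ := hIVT
    have huS : u ∈ S := ⟨⟨hu.1, le_trans hu.2 (le_trans (le_of_lt htw) hwS.1.2)⟩, hu0⟩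
    have : w ≤ u := csInf_le hSbdd huS
    have := this.trans hu.2
    linarith
  have hmono : StrictMonoOn f (Set.Icc 0 w) := by
    apply StrictMonoOn.mono (s := Set.Icc 0 w)
    · apply strictMonoOn_of_deriv_pos (convex_Icc 0 w)
        ((hdiff 0 w (le_of_lt hw0)).continuousOn)
      intro t ht
      rw [interior_Icc] at ht
      exact hposlt t (le_of_lt ht.1) ht.2
    · exact le_rfl
  have : f 0 < f w := hmono ⟨le_rfl, le_of_lt hw0⟩ ⟨le_of_lt hw0, le_rfl⟩ hw0
  rw [hzero w hwS.2] at this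
  exact absurd hf0 (not_lt_of_gt this)

/-- Suppose `f : ℝ → ℝ` is continuously differentiable, bounded below with
attained minimum value `fmin`, `f 0 > fmin`, `f'(0) ≠ 0`, and satisfies the
positive-definite Polyak–Łojasiewicz inequality `|f'(z)| ≥ α(f z − fmin)` for a
positive-definite `α`. With `s = sign f'(0)`, one has `f'(z) ≠ 0` whenever `s·z > 0`. -/
theorem stmt17 (f : ℝ → ℝ) (fmin : ℝ)
    (hC1 : ContDiff ℝ 1 f)
    (hfmin_le : ∀ z : ℝ, fmin ≤ f z)
    (hfmin_attained : ∃ z : ℝ, f z = fmin)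
    (hf0 : fmin < f 0)
    (hf'0 : deriv f 0 ≠ 0)
    (α : ℝ → ℝ) (hα0 : α 0 = 0) (hαpos : ∀ x : ℝ, 0 < x → 0 < α x)
    (hαnonneg : ∀ x : ℝ, 0 ≤ x → 0 ≤ α x)
    (hPL : ∀ z : ℝ, α (f z - fmin) ≤ |deriv f z|) :
    ∀ z : ℝ, 0 < Real.sign (deriv f 0) * z → deriv f z ≠ 0 := by
  have hcont : Continuous (deriv f) := hC1.continuous_deriv le_rfl
  have hdf : Differentiable ℝ f := hC1.differentiable one_ne_zero
  have hzero : ∀ z : ℝ, deriv f z = 0 → f z = fmin := by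
    intro z hd
    have h1 := hPL z
    rw [hd, abs_zero] at h1
    by_contra hne
    have : 0 < f z - fmin := sub_pos.mpr (lt_of_le_of_ne (hfmin_le z) (Ne.symm hne))
    exact absurd h1 (not_le_of_gt (hαpos _ this))
  rcases hf'0.lt_or_gt with hneg | hpos
  · -- deriv f 0 < 0 : reduce to g = f ∘ neg
    intro z hz
    rw [Real.sign_of_neg hneg] at hz
    have hzneg : z < 0 := by nlinarith
    set g : ℝ → ℝ := fun x => f (-x) with hg
    have hderg : ∀ x, deriv g x = -deriv f (-x) := by
      intro x
      simpa using deriv_comp_neg f x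
    have hcontg : Continuous (deriv g) := by
      have : deriv g = fun x => -deriv f (-x) := funext hderg
      rw [this]
      exact (hcont.comp continuous_neg).neg
    have := stmt17_aux g fmin hcontg (by simpa [hg] using hf0)
      (fun x y _ => ((hdf.comp differentiable_neg).differentiableOn))
      (by rw [hderg]; simpa using neg_pos.mpr hneg)
      (fun t ht => by
        apply hzero
        rw [hderg] at ht
        simpa using ht)
      (-z) (by linarith)
    rw [hderg] at this
    simpa using this
  · intro z hz
    rw [Real.sign_of_pos hpos] at hz
    rw [one_mul] at hz
    exact stmt17_aux f fmin hcont hf0 (fun x y _ => hdf.differentiableOn) hpos hzero z hz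
end
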